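/- arXiv:1709.05536 — 9 statements merged into one kernel-verified Lean document; each statement's English description precedes it below -/
import Mathlib

section
/- For p an odd prime, ζ_p a primitive p-th root of unity, r a primitive root modulo p, m = (p-1)/2, α = ∏_{j=0}^{m-1}(1-ζ_p^{r^j}), and σ the Galois automorphism of Q(ζ_p)/Q with σ(ζ_p)=ζ_p^r, we have σ(α) = -ζ_p^{p-1}·α. -/
/-- For `p` an odd prime, `ζ` a primitive `p`-th root of unity, `r` a primitive root mod `p`,
`m = (p-1)/2`, `α = ∏_{j<m} (1 - ζ^{r^j})`, and `σ` the Galois automorphism with `σ ζ = ζ^r`,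
we have `σ α = -ζ^{p-1} * α`. -/
theorem stmt0 (p : ℕ) (hp : p.Prime) (hodd : Odd p)
    (K : Type*) [Field K] [CharZero K]
    (ζ : K) (hζ : IsPrimitiveRoot ζ p)
    (r : ℕ) (hr : orderOf (r : ZMod p) = p - 1)
    (σ : K ≃ₐ[ℚ] K) (hσ : σ ζ = ζ ^ r) :
    σ (∏ j ∈ Finset.range ((p - 1) / 2), (1 - ζ ^ r ^ j)) =
      -ζ ^ (p - 1) * ∏ j ∈ Finset.range ((p - 1) / 2), (1 - ζ ^ r ^ j) := by
  haveI := Fact.mk hp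
  have hp2 : p ≠ 2 := by rintro rfl; exact (by decide : ¬ Odd 2) hodd
  have hp3 : 3 ≤ p := lt_of_le_of_ne hp.two_le (Ne.symm hp2)
  set m := (p - 1) / 2 with hm
  have h2m : 2 * m = p - 1 := by
    obtain ⟨k, rfl⟩ := hodd; omega
  set f : ℕ → K := fun j => 1 - ζ ^ r ^ j with hf
  have hσf : ∀ j, σ (f j) = f (j + 1) := by
    intro j
    simp only [hf, map_sub, map_one, map_pow, hσ, ← pow_mul, pow_succ]
    ring_nf
  -- r ^ m ≡ p - 1 mod p
  have hrm : (r : ZMod p) ^ m = -1 := by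
    have hsq : ((r : ZMod p) ^ m) * ((r : ZMod p) ^ m) = 1 := by
      rw [← pow_add, ← two_mul, h2m, ← hr, pow_orderOf_eq_one]
    rcases mul_self_eq_one_iff.mp hsq with h | h
    · exfalso
      have hdvd : orderOf (r : ZMod p) ∣ m := orderOf_dvd_of_pow_eq_one h
      rw [hr] at hdvd
      have := Nat.le_of_dvd (by omega) hdvd
      omega
    · exact h
  have hmod : r ^ m % p = (p - 1) % p := by
    have : ((r ^ m : ℕ) : ZMod p) = ((p - 1 : ℕ) : ZMod p) := by
      push_cast
      rw [hrm]
      have : ((p - 1 : ℕ) : ZMod p) = (p : ZMod p) - 1 := by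
        have := Nat.cast_sub (by omega : 1 ≤ p) (R := ZMod p)
        simpa using this
      rw [this]
      simp
    exact (ZMod.natCast_eq_natCast_iff' _ _ _).mp this
  have hordζ : orderOf ζ = p := (hζ.eq_orderOf).symm
  have hζrm : ζ ^ r ^ m = ζ ^ (p - 1) := by
    rw [← pow_mod_orderOf ζ (r ^ m), ← pow_mod_orderOf ζ (p - 1), hordζ, hmod]
  have hζp : ζ ^ p = 1 := hζ.pow_eq_one
  have hζne : (1 : K) - ζ ≠ 0 := by
    intro h
    exact hζ.ne_one (by omega) (by linear_combination -h)
  have hfm : f m = -ζ ^ (p - 1) * f 0 := by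
    simp only [hf, hζrm, pow_zero, pow_one]
    have h1 : ζ ^ (p - 1) * ζ = 1 := by
      rw [← pow_succ]
      have : p - 1 + 1 = p := by omega
      rw [this, hζp]
    ring_nf
    linear_combination -h1
  have key : (1 - ζ) * σ (∏ j ∈ Finset.range m, f j)
      = (1 - ζ) * (-ζ ^ (p - 1) * ∏ j ∈ Finset.range m, f j) := by
    rw [map_prod]
    simp only [hσf]
    have h1 : (1 - ζ) * ∏ j ∈ Finset.range m, f (j + 1)
        = ∏ j ∈ Finset.range (m + 1), f j := by
      rw [Finset.prod_range_succ']
      simp only [hf, pow_zero, pow_one]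
      ring
    rw [h1, Finset.prod_range_succ, hfm]
    ring
  exact mul_left_cancel₀ hζne key
end

section
/- With p an odd prime, r a primitive root mod p, λ an integer with λ(r-1) ≡ 1 (mod p), m = (p-1)/2, and α = ∏_{j=0}^{m-1}(1-ζ_p^{r^j}), the element ζ_p^λ·α satisfies σ(ζ_p^λ α) = -ζ_p^λ α, where σ(ζ_p) = ζ_p^r. -/
/-- With `λ` an integer satisfying `λ(r-1) ≡ 1 (mod p)`, the element `ζ^λ α` satisfies
`σ (ζ^λ α) = -(ζ^λ α)`. -/
theorem stmt1 (p : ℕ) (hp : p.Prime) (hodd : Odd p)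
    (K : Type*) [Field K] [CharZero K]
    (ζ : K) (hζ : IsPrimitiveRoot ζ p)
    (r : ℕ) (hr : orderOf (r : ZMod p) = p - 1)
    (lam : ℤ) (hlam : ((lam * ((r : ℤ) - 1) : ℤ) : ZMod p) = 1)
    (σ : K ≃ₐ[ℚ] K) (hσ : σ ζ = ζ ^ r) :
    σ (ζ ^ lam * ∏ j ∈ Finset.range ((p - 1) / 2), (1 - ζ ^ r ^ j)) =
      -(ζ ^ lam * ∏ j ∈ Finset.range ((p - 1) / 2), (1 - ζ ^ r ^ j)) := by
  have hp2 : 2 ≤ p := hp.two_le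
  have hpne2 : p ≠ 2 := by rintro rfl; exact (by norm_num : ¬ Odd 2) hodd
  have hp3 : 3 ≤ p := by omega
  haveI : Fact p.Prime := ⟨hp⟩
  have hζ0 : ζ ≠ 0 := hζ.ne_zero (by omega)
  have hζ1 : ζ ≠ 1 := hζ.ne_one (by omega)
  set m := (p - 1) / 2 with hm
  have hm2 : 2 * m = p - 1 := by
    obtain ⟨k, hk⟩ := hodd; omega
  have hmpos : 0 < m := by omega
  -- r^m = -1 in ZMod p
  have hx : ((r : ZMod p)) ^ m = -1 := by
    have h1 : ((r : ZMod p)) ^ m * ((r : ZMod p)) ^ m = 1 := by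
      rw [← pow_add, show m + m = p - 1 by omega, ← hr, pow_orderOf_eq_one]
    rcases mul_self_eq_one_iff.mp h1 with h | h
    · exfalso
      have hdvd := orderOf_dvd_of_pow_eq_one h
      rw [hr] at hdvd
      have := Nat.le_of_dvd hmpos hdvd
      omega
    · exact h
  have hdvdn : p ∣ r ^ m + 1 := by
    have h0 : (((r : ℤ) ^ m + 1 : ℤ) : ZMod p) = 0 := by
      push_cast
      rw [hx]; ring
    have := (ZMod.intCast_zmod_eq_zero_iff_dvd _ _).mp h0
    exact_mod_cast this
  have hζm : ζ ^ (r ^ m) * ζ = 1 := by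
    rw [← pow_succ]
    exact (hζ.pow_eq_one_iff_dvd _).mpr hdvdn
  -- σ of the zpow part
  have hlampow : σ (ζ ^ lam) = ζ ^ lam * ζ := by
    have hd : (p : ℤ) ∣ (r : ℤ) * lam - (lam + 1) := by
      apply (ZMod.intCast_zmod_eq_zero_iff_dvd _ _).mp
      have h' := hlam
      push_cast at h' ⊢
      linear_combination h'
    obtain ⟨k, hk⟩ := hd
    have hsplit : (r : ℤ) * lam = (lam + 1) + (p : ℤ) * k := by linarith
    rw [map_zpow₀, hσ, ← zpow_natCast ζ r, ← zpow_mul, mul_comm ((r : ℤ)) lam,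
      mul_comm lam ((r : ℤ)), hsplit, zpow_add₀ hζ0, zpow_add₀ hζ0, zpow_mul,
      zpow_natCast, hζ.pow_eq_one, one_zpow, mul_one, zpow_one]
  -- σ of the product
  have hprod : σ (∏ j ∈ Finset.range m, (1 - ζ ^ r ^ j)) * (1 - ζ) =
      (∏ j ∈ Finset.range m, (1 - ζ ^ r ^ j)) * (1 - ζ ^ r ^ m) := by
    rw [map_prod]
    have e : ∀ j, σ (1 - ζ ^ r ^ j) = 1 - ζ ^ r ^ (j + 1) := by
      intro j
      rw [map_sub, map_one, map_pow, hσ, ← pow_mul, pow_succ, mul_comm (r ^ j) r]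
    simp_rw [e]
    have h0 : (1 : K) - ζ = 1 - ζ ^ r ^ 0 := by norm_num
    rw [h0, ← Finset.prod_range_succ' (fun j => 1 - ζ ^ r ^ j) m,
      Finset.prod_range_succ]
  -- combine, cancelling (1-ζ) * ζ
  have hne : (1 - ζ) * ζ ≠ 0 := by
    apply mul_ne_zero _ hζ0
    intro h
    exact hζ1 (sub_eq_zero.mp h).symm
  apply mul_right_cancel₀ hne
  rw [map_mul, hlampow]
  calc ζ ^ lam * ζ * σ (∏ j ∈ Finset.range m, (1 - ζ ^ r ^ j)) * ((1 - ζ) * ζ)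
      = ζ ^ lam * ζ * (σ (∏ j ∈ Finset.range m, (1 - ζ ^ r ^ j)) * (1 - ζ)) * ζ := by
        ring
    _ = ζ ^ lam * ζ * ((∏ j ∈ Finset.range m, (1 - ζ ^ r ^ j)) * (1 - ζ ^ r ^ m)) * ζ := by
        rw [hprod]
    _ = ζ ^ lam * (∏ j ∈ Finset.range m, (1 - ζ ^ r ^ j)) * (ζ - ζ ^ r ^ m * ζ) * ζ := by
        ring
    _ = -(ζ ^ lam * ∏ j ∈ Finset.range m, (1 - ζ ^ r ^ j)) * ((1 - ζ) * ζ) := by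
        rw [hζm]; ring
end

section
/- With notation as above, (ζ_p^λ α)^2 = (-1)^m · p, where m = (p-1)/2. -/
open Finset

/-- With notation as above, `(ζ^λ α)^2 = (-1)^m * p`, where `m = (p-1)/2`. -/
theorem stmt2 (p : ℕ) (hp : p.Prime) (hodd : Odd p)
    (K : Type*) [Field K] [CharZero K]
    (ζ : K) (hζ : IsPrimitiveRoot ζ p)
    (r : ℕ) (hr : orderOf (r : ZMod p) = p - 1)
    (lam : ℤ) (hlam : ((lam * ((r : ℤ) - 1) : ℤ) : ZMod p) = 1) :
    (ζ ^ lam * ∏ j ∈ Finset.range ((p - 1) / 2), (1 - ζ ^ r ^ j)) ^ 2 =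
      (-1 : K) ^ ((p - 1) / 2) * (p : K) := by
  haveI : Fact p.Prime := ⟨hp⟩
  obtain ⟨m, hm⟩ := hodd
  have hp2 : p ≠ 2 := by rintro rfl; omega
  have hple : 3 ≤ p := by
    have := hp.two_le; rcases Nat.lt_or_ge p 3 with h | h
    · interval_cases p <;> omega
    · exact h
  have hm1 : 1 ≤ m := by omega
  have hm2 : (p - 1) / 2 = m := by omega
  have hp1 : p - 1 = m + m := by omega
  rw [hm2]
  -- basic facts about ζ
  have hζp : ζ ^ p = 1 := hζ.pow_eq_one
  have hζ0 : ζ ≠ 0 := by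
    intro h; rw [h, zero_pow hp.ne_zero] at hζp; exact zero_ne_one hζp
  have hpow : ∀ a : ℕ, ζ ^ (a % p) = ζ ^ a := by
    intro a
    conv_rhs => rw [← Nat.div_add_mod a p]
    rw [pow_add, pow_mul, hζp, one_pow, one_mul]
  -- the exponential map g and the function f
  set g : ZMod p → K := fun x => ζ ^ x.val with hgdef
  have hgadd : ∀ x y : ZMod p, g (x + y) = g x * g y := by
    intro x y
    show ζ ^ (x + y).val = ζ ^ x.val * ζ ^ y.val
    rw [ZMod.val_add, hpow, pow_add]
  have hg0 : g 0 = 1 := by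
    show ζ ^ (0 : ZMod p).val = 1
    rw [ZMod.val_zero, pow_zero]
  have hgprod : ∀ (n : ℕ) (c : ℕ → ZMod p),
      ∏ j ∈ range n, g (c j) = g (∑ j ∈ range n, c j) := by
    intro n c
    induction n with
    | zero => simp [hg0]
    | succ n ih => rw [prod_range_succ, sum_range_succ, hgadd, ih]
  set f : ZMod p → K := fun x => 1 - g x with hfdef
  have hfneg : ∀ x : ZMod p, f (-x) = -g (-x) * f x := by
    intro x
    have h : g (-x) * g x = 1 := by rw [← hgadd, neg_add_cancel, hg0]
    show 1 - g (-x) = -g (-x) * (1 - g x)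
    linear_combination -h
  -- facts about R = (r : ZMod p)
  set R : ZMod p := (r : ZMod p) with hRdef
  have hRpow : R ^ (p - 1) = 1 := by rw [← hr]; exact pow_orderOf_eq_one R
  have hR0 : R ≠ 0 := by
    have hu : IsUnit R := IsUnit.of_mul_eq_one (a := R) (R ^ (p - 2)) (by
      rw [← pow_succ']
      have : p - 2 + 1 = p - 1 := by omega
      rw [this, hRpow])
    exact hu.ne_zero
  have hR1 : R ≠ 1 := by
    intro h; rw [h, orderOf_one] at hr; omega
  have hRm : R ^ m = -1 := by
    have h2 : (R ^ m - 1) * (R ^ m + 1) = 0 := by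
      have : R ^ m * R ^ m = 1 := by
        rw [← pow_add, ← hp1, hRpow]
      linear_combination this
    rcases mul_eq_zero.mp h2 with h | h
    · exfalso
      have hne : R ^ m ≠ 1 := by
        apply pow_ne_one_of_lt_orderOf (by omega)
        omega
      exact hne (sub_eq_zero.mp h)
    · exact eq_neg_of_add_eq_zero_left h
  -- product over all nonzero elements equals p
  have hinj : ∀ x ∈ range (p - 1), ∀ y ∈ range (p - 1), R ^ x = R ^ y → x = y := by
    intro x hx y hy hxy
    exact pow_injOn_Iio_orderOf (x := R) (by rw [hr]; exact mem_range.mp hx)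
      (by rw [hr]; exact mem_range.mp hy) hxy
  have himg : (range (p - 1)).image (fun j => R ^ j) = (univ : Finset (ZMod p)) \ {0} := by
    apply Finset.eq_of_subset_of_card_le
    · intro x hx
      simp only [mem_image, mem_range] at hx
      obtain ⟨j, _, rfl⟩ := hx
      simp [pow_ne_zero _ hR0]
    · rw [Finset.card_sdiff_of_subset (by simp), Finset.card_image_of_injOn hinj]
      simp [ZMod.card]
  have hζ2 : IsPrimitiveRoot ζ ((p - 1) + 1) := by
    rwa [Nat.sub_add_cancel hp.one_le]
  have hcycl : ∏ k ∈ range (p - 1), (1 - ζ ^ (k + 1)) = (p : K) := by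
    have := hζ2.prod_one_sub_pow_eq_order
    rw [this]
    rw [Nat.cast_sub hp.one_le]
    ring
  have hsdiff : ∏ x ∈ (univ : Finset (ZMod p)) \ {0}, f x = (p : K) := by
    rw [← hcycl]
    apply Finset.prod_nbij' (fun x => x.val - 1) (fun k => ((k + 1 : ℕ) : ZMod p))
    · intro x hx
      simp only [mem_sdiff, mem_univ, mem_singleton, true_and] at hx
      have h1 : x.val ≠ 0 := fun h => hx (by rwa [← ZMod.val_eq_zero])
      have h2 : x.val < p := ZMod.val_lt x
      simp only [mem_range]; omega
    · intro k hk
      simp only [mem_range] at hk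
      simp only [mem_sdiff, mem_univ, mem_singleton, true_and]
      intro h
      rw [ZMod.natCast_eq_zero_iff] at h
      have := Nat.le_of_dvd (by omega) h
      omega
    · intro x hx
      simp only [mem_sdiff, mem_univ, mem_singleton, true_and] at hx
      have h1 : x.val ≠ 0 := fun h => hx (by rwa [← ZMod.val_eq_zero])
      have : x.val - 1 + 1 = x.val := by omega
      rw [this, ZMod.natCast_val, ZMod.cast_id]
    · intro k hk
      simp only [mem_range] at hk
      rw [ZMod.val_cast_of_lt (by omega : k + 1 < p)]
      omega
    · intro x hx
      simp only [mem_sdiff, mem_univ, mem_singleton, true_and] at hx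
      have h1 : x.val ≠ 0 := fun h => hx (by rwa [← ZMod.val_eq_zero])
      have h2 : x.val < p := ZMod.val_lt x
      show f x = 1 - ζ ^ (x.val - 1 + 1)
      have : x.val - 1 + 1 = x.val := by omega
      rw [this]
  have hprodall : ∏ j ∈ range (p - 1), f (R ^ j) = (p : K) := by
    rw [← hsdiff, ← himg, Finset.prod_image hinj]
  -- split the product
  set A : K := ∏ j ∈ range m, f (R ^ j) with hAdef
  set S : ZMod p := ∑ j ∈ range m, R ^ j with hSdef
  have hsplit : (p : K) = A * ((-1 : K) ^ m * g (-S) * A) := by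
    rw [← hprodall, hp1, Finset.prod_range_add]
    congr 1
    have hB : ∀ j, f (R ^ (m + j)) = -g (-(R ^ j)) * f (R ^ j) := by
      intro j
      rw [pow_add, hRm, neg_one_mul, hfneg]
    calc ∏ j ∈ range m, f (R ^ (m + j))
        = ∏ j ∈ range m, (-g (-(R ^ j)) * f (R ^ j)) := by
          exact Finset.prod_congr rfl fun j _ => hB j
      _ = (∏ j ∈ range m, -g (-(R ^ j))) * A := Finset.prod_mul_distrib
      _ = ((-1 : K) ^ m * ∏ j ∈ range m, g (-(R ^ j))) * A := by
          congr 1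
          have : ∀ j ∈ range m, -g (-(R ^ j)) = (-1 : K) * g (-(R ^ j)) := by
            intro j _; ring
          rw [Finset.prod_congr rfl this, Finset.prod_mul_distrib,
            Finset.prod_const, Finset.card_range]
      _ = (-1 : K) ^ m * g (-S) * A := by
          rw [hgprod m (fun j => -(R ^ j))]
          congr 2
          rw [hSdef, ← Finset.sum_neg_distrib]
  -- the exponent computation
  set t : ZMod p := ((2 * lam : ℤ) : ZMod p) with htdef
  have hlam' : (lam : ZMod p) * (R - 1) = 1 := by
    push_cast at hlam
    convert hlam using 2
  have htS : t = -S := by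
    have hgs : S * (R - 1) = -2 := by
      rw [hSdef, geom_sum_mul, hRm]
      ring
    have hR1' : R - 1 ≠ 0 := sub_ne_zero.mpr hR1
    have h0 : (t + S) * (R - 1) = 0 := by
      have ht' : t = 2 * (lam : ZMod p) := by push_cast [htdef]; ring
      rw [ht', add_mul, hgs]
      linear_combination (2 : ZMod p) * hlam'
    rcases mul_eq_zero.mp h0 with h | h
    · exact eq_neg_of_add_eq_zero_left h
    · exact absurd h hR1'
  have hz2 : (ζ ^ lam) ^ 2 = g t := by
    have h1 : (ζ ^ lam) ^ 2 = ζ ^ (2 * lam) := by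
      rw [← zpow_natCast (ζ ^ lam) 2, ← zpow_mul]
      ring_nf
    rw [h1]
    have hdvd : (p : ℤ) ∣ 2 * lam - (t.val : ℤ) := by
      rw [← ZMod.intCast_zmod_eq_zero_iff_dvd]
      push_cast
      rw [ZMod.natCast_val, ZMod.cast_id, htdef]
      push_cast
      ring
    obtain ⟨c, hc⟩ := hdvd
    have : (2 * lam : ℤ) = (t.val : ℤ) + p * c := by linarith
    rw [this, zpow_add₀ hζ0, zpow_natCast]
    have : ζ ^ ((p : ℤ) * c) = 1 := by
      rw [zpow_mul, zpow_natCast, hζp, one_zpow]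
    rw [this, mul_one]
  -- assemble
  have hα : ∏ j ∈ range m, (1 - ζ ^ r ^ j) = A := by
    apply Finset.prod_congr rfl
    intro j _
    show 1 - ζ ^ r ^ j = f (R ^ j)
    have : R ^ j = ((r ^ j : ℕ) : ZMod p) := by push_cast; ring
    rw [hfdef]
    show 1 - ζ ^ r ^ j = 1 - ζ ^ (R ^ j).val
    rw [this, ZMod.val_natCast, hpow]
  rw [hα, mul_pow, hz2, htS]
  have hone : ((-1 : K) ^ m) * ((-1 : K) ^ m) = 1 := by
    rw [← pow_add, ← two_mul, pow_mul]
    norm_num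
  calc g (-S) * A ^ 2 = ((-1 : K) ^ m) * ((-1 : K) ^ m * (g (-S) * A ^ 2)) := by
        rw [← mul_assoc, hone, one_mul]
    _ = (-1 : K) ^ m * (p : K) := by
        rw [hsplit]; ring
end

section
/- Let n > 1 be odd, p a prime with p ≡ 1 (mod n), K the subfield of Q(ζ_p) fixed by σ^n where σ generates Gal(Q(ζ_p)/Q). Let z = ζ_p^λ α (1-ζ_p) and x = Tr_{Q(ζ_p)/K}(z). Then Tr_{K/Q}(x²) = p² and Tr_{K/Q}(x·σ^j(x)) = 0 for j ≢ 0 (mod n). -/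
open Finset

-- generic shift lemma for periodic functions
lemma sum_range_shift {M : Type*} [AddCommGroup M] (F : ℕ → M) (N : ℕ)
    (hF : ∀ k, F (k + N) = F k) (s : ℕ) :
    ∑ k ∈ range N, F (k + s) = ∑ k ∈ range N, F k := by
  induction s with
  | zero => simp
  | succ s ih =>
    have h1 : ∑ k ∈ range N, F (k + (s+1)) = ∑ k ∈ range N, F ((k + 1) + s) := by
      apply Finset.sum_congr rfl; intro k _; ring_nf
    rw [h1, ← ih]
    have h2 := Finset.sum_range_succ' (fun k => F (k + s)) N
    have h3 := Finset.sum_range_succ (fun k => F (k + s)) N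
    have h4 : F (N + s) = F (0 + s) := by
      rw [zero_add]; rw [show N + s = s + N by ring, hF]
    rw [h3] at h2
    -- h2 : ∑ k in range N, F (k+s) + F (N+s) = ∑ k in range N, F ((k+1)+s) + F (0+s)
    have := h2
    rw [h4] at this
    exact (add_right_cancel this).symm

-- double sum over grid equals sum over range (n*q)
lemma sum_grid {M : Type*} [AddCommMonoid M] (F : ℕ → M) (n q : ℕ) (hn : 0 < n) :
    ∑ i ∈ range n, ∑ a ∈ range q, F (i + a * n) = ∑ k ∈ range (n * q), F k := by
  rw [Finset.sum_sigma']
  apply Finset.sum_nbij' (i := fun x => x.1 + x.2 * n) (j := fun k => ⟨k % n, k / n⟩)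
  · rintro ⟨i, a⟩ h
    simp only [Finset.mem_sigma, Finset.mem_range] at h
    simp only [Finset.mem_range]
    calc i + a * n < n + a * n := by omega
    _ = n * (a + 1) := by ring
    _ ≤ n * q := Nat.mul_le_mul_left n h.2
  · intro k hk
    simp only [Finset.mem_range] at hk
    simp only [Finset.mem_sigma, Finset.mem_range]
    constructor
    · exact Nat.mod_lt _ hn
    · rw [Nat.div_lt_iff_lt_mul hn]
      calc k < n * q := hk
      _ = q * n := mul_comm n q
  · rintro ⟨i, a⟩ h
    simp only [Finset.mem_sigma, Finset.mem_range] at h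
    have h1 : (i + a * n) % n = i := by
      rw [Nat.add_mul_mod_self_right, Nat.mod_eq_of_lt h.1]
    have h2 : (i + a * n) / n = a := by
      rw [Nat.add_mul_div_right _ _ hn, Nat.div_eq_of_lt h.1, zero_add]
    simp [h1, h2]
  · intro k hk
    exact Nat.mod_add_div' k n
  · rintro ⟨i, a⟩ h; rfl

-- image lemma
lemma image_eq_erase_zero (p : ℕ) [Fact p.Prime] (g : ℕ → ZMod p)
    (hinj : Set.InjOn g ↑(Finset.range (p-1))) (h0 : ∀ k ∈ Finset.range (p-1), g k ≠ 0) :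
    (Finset.range (p-1)).image g = Finset.univ.erase (0 : ZMod p) := by
  have hp := (Fact.out : p.Prime)
  apply Finset.eq_of_subset_of_card_le
  · intro s hs
    simp only [Finset.mem_image] at hs
    obtain ⟨k, hk, rfl⟩ := hs
    exact Finset.mem_erase.2 ⟨h0 k hk, Finset.mem_univ _⟩
  · rw [Finset.card_erase_of_mem (Finset.mem_univ _), Finset.card_image_of_injOn hinj]
    simp [ZMod.card]

/-- Let `n > 1` be odd, `p ≡ 1 (mod n)` prime, `K` the fixed field of `σ^n` in `ℚ(ζ_p)`,
`z = ζ^λ α (1-ζ)` and `x = Tr_{ℚ(ζ_p)/K}(z) = ∑_{j=1}^{(p-1)/n} σ^{jn}(z)`.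
Then `Tr_{K/ℚ}(x²) = p²` and `Tr_{K/ℚ}(x σ^j(x)) = 0` for `j ≢ 0 (mod n)`,
where the trace from the degree-`n` field `K` is the sum over the `n` conjugates `σ^i`. -/
theorem stmt3 (p n : ℕ) (hp : p.Prime) (hn1 : 1 < n) (hnodd : Odd n) (hpn : p % n = 1)
    (L : Type*) [Field L] [CharZero L]
    (ζ : L) (hζ : IsPrimitiveRoot ζ p)
    (r : ℕ) (hr : orderOf (r : ZMod p) = p - 1)
    (lam : ℤ) (hlam : ((lam * ((r : ℤ) - 1) : ℤ) : ZMod p) = 1)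
    (σ : L ≃ₐ[ℚ] L) (hσ : σ ζ = ζ ^ r)
    (z : L)
    (hz : z = ζ ^ lam * (∏ j ∈ Finset.range ((p - 1) / 2), (1 - ζ ^ r ^ j)) * (1 - ζ))
    (x : L) (hx : x = ∑ j ∈ Finset.range ((p - 1) / n), (σ ^ ((j + 1) * n)) z) :
    (∑ i ∈ Finset.range n, (σ ^ i) (x * x) = (p : L) ^ 2) ∧
      ∀ j : ℕ, ¬ n ∣ j → ∑ i ∈ Finset.range n, (σ ^ i) (x * (σ ^ j) x) = 0 := by
  haveI hpf : Fact p.Prime := ⟨hp⟩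
  -- numerology
  have hn3 : 3 ≤ n := by
    rcases hnodd with ⟨t, ht⟩; omega
  have hpn' : n ∣ p - 1 := by
    have h := Nat.div_add_mod p n
    rw [hpn] at h
    exact ⟨p / n, (Nat.sub_eq_of_eq_add h.symm)⟩
  have hp2 : p ≠ 2 := by
    rintro rfl
    have : (2 : ℕ) % n = 2 := Nat.mod_eq_of_lt (by omega)
    omega
  have hpodd : Odd p := hp.odd_of_ne_two hp2
  have hp1 : 1 < p := hp.one_lt
  set q : ℕ := (p - 1) / n with hqdef
  have hq : p - 1 = n * q := (Nat.mul_div_cancel' hpn' ).symm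
  have hqeven : 2 ∣ q := by
    rcases hpodd with ⟨t, ht⟩
    have h2 : Even (n * q) := by
      refine ⟨t, ?_⟩
      omega
    rcases Nat.even_mul.1 h2 with h | h
    · exact absurd h (Nat.not_even_iff_odd.2 hnodd)
    · exact h.two_dvd
  have hq0 : 0 < q := by
    rcases Nat.eq_zero_or_pos q with h | h
    · rw [h, mul_zero] at hq; omega
    · exact h
  set m : ℕ := (p - 1) / 2 with hmdef
  have hm : p - 1 = 2 * m := by
    rcases hpodd with ⟨t, ht⟩; omega
  have hmn : m = n * (q / 2) := by
    rcases hqeven with ⟨u, hu⟩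
    have h2 : (2 * u) / 2 = u := by omega
    have h3 : 2 * m = 2 * (n * u) := by
      rw [← hm, hq, hu]; ring
    rw [hu, h2]
    omega
  -- ρ and E calculus
  set ρ : ZMod p := (r : ZMod p) with hρdef
  have hρpow : ρ ^ (p - 1) = 1 := by rw [← hr]; exact pow_orderOf_eq_one ρ
  have hρ0 : ρ ≠ 0 := by
    intro h
    rw [h, zero_pow (by omega : p - 1 ≠ 0)] at hρpow
    exact zero_ne_one hρpow
  have hζ0 : ζ ≠ 0 := hζ.ne_zero (by omega)
  have horder : orderOf ζ = p := hζ.eq_orderOf.symm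
  have hEmod : ∀ k : ℕ, ζ ^ k = ζ ^ (k % p) := by
    intro k
    conv_lhs => rw [← Nat.div_add_mod k p]
    rw [pow_add, pow_mul, hζ.pow_eq_one, one_pow, one_mul]
  set E : ZMod p → L := fun t => ζ ^ t.val with hEdef
  have hEnat : ∀ c : ℕ, E ((c : ℕ) : ZMod p) = ζ ^ c := by
    intro c
    show ζ ^ (ZMod.val ((c : ℕ) : ZMod p)) = ζ ^ c
    rw [ZMod.val_natCast, ← hEmod]
  have hE0 : E 0 = 1 := by
    show ζ ^ (ZMod.val (0 : ZMod p)) = 1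
    rw [ZMod.val_zero, pow_zero]
  have hE1 : E 1 = ζ := by
    have := hEnat 1
    rw [Nat.cast_one, pow_one] at this
    exact this
  have hEadd : ∀ a b : ZMod p, E (a + b) = E a * E b := by
    intro a b
    show ζ ^ (a + b).val = ζ ^ a.val * ζ ^ b.val
    rw [ZMod.val_add, ← hEmod, pow_add]
  have hEneg : ∀ t : ZMod p, E (-t) * E t = 1 := by
    intro t
    rw [← hEadd, neg_add_cancel, hE0]
  have hcastval : ∀ t : ZMod p, ((t.val : ℕ) : ZMod p) = t := by
    intro t
    simp [ZMod.natCast_val, ZMod.cast_id]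
  have hEint : ∀ c : ℤ, ζ ^ c = E ((c : ℤ) : ZMod p) := by
    intro c
    set v : ℕ := ((c : ZMod p)).val with hv
    have hdvd : (p : ℤ) ∣ c - (v : ℤ) := by
      rw [← ZMod.intCast_zmod_eq_zero_iff_dvd]
      push_cast
      rw [hv, ZMod.natCast_val, ZMod.cast_id, sub_self]
    have h1 : ζ ^ ((c : ℤ) - (v : ℤ)) = 1 := (hζ.zpow_eq_one_iff_dvd _).2 hdvd
    calc ζ ^ c = ζ ^ ((v : ℤ) + (c - (v:ℤ))) := by ring_nf
    _ = ζ ^ (v : ℤ) * ζ ^ ((c:ℤ) - (v:ℤ)) := zpow_add₀ hζ0 _ _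
    _ = ζ ^ (v : ℕ) := by rw [h1, mul_one, zpow_natCast]
    _ = E ((c : ℤ) : ZMod p) := rfl
  have hσE : ∀ t : ZMod p, σ (E t) = E (ρ * t) := by
    intro t
    show σ (ζ ^ t.val) = E (ρ * t)
    rw [map_pow, hσ, ← pow_mul, ← hEnat]
    congr 1
    push_cast
    rw [hcastval]
  -- lamZ, α, C
  set lamZ : ZMod p := ((lam : ℤ) : ZMod p) with hlamZdef
  have hlamZ : lamZ * (ρ - 1) = 1 := by
    have h := hlam
    push_cast at h
    exact h
  set α : L := ∏ j ∈ Finset.range m, (1 - E (ρ ^ j)) with hαdef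
  have hρnatpow : ∀ j : ℕ, ((r ^ j : ℕ) : ZMod p) = ρ ^ j := by
    intro j; push_cast; rfl
  have hαz : (∏ j ∈ Finset.range m, (1 - ζ ^ r ^ j)) = α := by
    apply Finset.prod_congr rfl
    intro j _
    rw [← hEnat (r ^ j), hρnatpow]
  set C : L := E lamZ * α with hCdef
  have hzC : z = C * (1 - E 1) := by
    rw [hz, hαz, hEint lam, hE1, hCdef]
  have hζ1 : (1 : L) - ζ ≠ 0 := by
    refine sub_ne_zero.2 ?_
    exact fun h => (hζ.ne_one hp1) h.symm
  have hρm : ρ ^ m = -1 := by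
    have h2 : (ρ ^ m) ^ 2 = 1 := by
      rw [← pow_mul, show m * 2 = p - 1 by omega, hρpow]
    have hne : ρ ^ m ≠ 1 := by
      intro h
      have hd := orderOf_dvd_of_pow_eq_one h
      rw [hr] at hd
      have hle := Nat.le_of_dvd (by omega) hd
      omega
    have h3 : (ρ ^ m - 1) * (ρ ^ m + 1) = 0 := by linear_combination h2
    rcases mul_eq_zero.1 h3 with h | h
    · exact absurd (by linear_combination h) hne
    · linear_combination h
  have hσα : σ α = -E (-1) * α := by
    have hchain : σ α * (1 - ζ) = α * (1 - E (ρ ^ m)) := by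
      have hσα' : σ α = ∏ j ∈ Finset.range m, (1 - E (ρ ^ (j + 1))) := by
        rw [hαdef, map_prod]
        apply Finset.prod_congr rfl
        intro j _
        rw [map_sub, map_one, hσE, ← pow_succ']
      have e1 := Finset.prod_range_succ' (fun j => (1 - E (ρ ^ j))) m
      have e2 := Finset.prod_range_succ (fun j => (1 - E (ρ ^ j))) m
      simp only [pow_zero, hE1] at e1
      rw [hσα', ← e1, e2, hαdef]
    -- now: σ α * (1 - ζ) = α * (1 - E (ρ^m)); and 1 - E(ρ^m) = -E(-1) * (1 - ζ)
    have hkey : (1 : L) - E (ρ ^ m) = -E (-1) * (1 - ζ) := by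
      rw [hρm, ← hE1]
      linear_combination -(hEneg 1)
    rw [hkey] at hchain
    have : σ α * (1 - ζ) = (-E (-1) * α) * (1 - ζ) := by
      rw [hchain]; ring
    exact mul_right_cancel₀ hζ1 this
  have hσC : σ C = -C := by
    have h1 : ρ * lamZ - 1 = lamZ := by linear_combination hlamZ
    rw [hCdef, map_mul, hσE, hσα]
    have h2 : E (ρ * lamZ) * -E (-1) = -E lamZ := by
      rw [show (-1 : ZMod p) = -1 by rfl]
      have := hEadd (ρ * lamZ) (-1)
      rw [show ρ * lamZ + -1 = lamZ by linear_combination hlamZ] at this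
      linear_combination this
    calc E (ρ * lamZ) * (-E (-1) * α) = (E (ρ * lamZ) * -E (-1)) * α := by ring
    _ = -E lamZ * α := by rw [h2]
    _ = -(E lamZ * α) := by ring
  set Z : ℕ → L := fun k => (-1) ^ k * C * (1 - E (ρ ^ k)) with hZdef
  have hz0 : z = Z 0 := by
    rw [hzC, hZdef]
    simp only [pow_zero, one_mul]
  have hZσ : ∀ k, σ (Z k) = Z (k + 1) := by
    intro k
    rw [hZdef]
    simp only
    rw [map_mul, map_mul, map_sub, map_one, hσE, hσC, map_pow, map_neg, map_one]
    rw [← pow_succ']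
    ring
  have hzk : ∀ k, (σ ^ k) z = Z k := by
    intro k
    induction k with
    | zero => rw [pow_zero]; exact hz0 ▸ rfl
    | succ k ih =>
      rw [pow_succ', AlgEquiv.mul_apply, ih, hZσ]
  have hZper : ∀ k, Z (k + (p - 1)) = Z k := by
    intro k
    rw [hZdef]
    simp only
    have h1 : (-1 : L) ^ (p - 1) = 1 := Even.neg_one_pow ⟨m, by omega⟩
    rw [pow_add, pow_add, hρpow, mul_one, h1, mul_one]
  -- injectivity of k ↦ ρ^k on range (p-1)
  have hρinj' : ∀ a b : ℕ, a < p - 1 → b < p - 1 → a ≤ b → ρ ^ a = ρ ^ b → a = b := by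
    intro a b ha hb hle hab
    have hba : ρ ^ (b - a) = 1 := by
      have h1 : ρ ^ a * ρ ^ (b - a) = ρ ^ a * 1 := by
        rw [mul_one, ← pow_add, show a + (b - a) = b by omega, hab]
      exact mul_left_cancel₀ (pow_ne_zero a hρ0) h1
    rcases Nat.eq_zero_or_pos (b - a) with h | h
    · omega
    · have hd := orderOf_dvd_of_pow_eq_one hba
      rw [hr] at hd
      have := Nat.le_of_dvd h hd
      omega
  have hρinj : Set.InjOn (fun k => ρ ^ k) ↑(Finset.range (p - 1)) := by
    intro a ha b hb hab
    simp only [Finset.coe_range, Set.mem_Iio] at ha hb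
    simp only at hab
    rcases le_total a b with h | h
    · exact hρinj' a b ha hb h hab
    · exact (hρinj' b a hb ha h hab.symm).symm
  -- sum of E over all of ZMod p is zero
  have hEuniv : ∑ s : ZMod p, E s = 0 := by
    have hgeom : ∑ i ∈ Finset.range p, ζ ^ i = 0 := hζ.geom_sum_eq_zero hp1
    rw [← hgeom]
    apply Finset.sum_nbij' (i := fun s => s.val) (j := fun i => ((i : ℕ) : ZMod p))
    · intro s _
      exact Finset.mem_range.2 (ZMod.val_lt s)
    · intro i _
      exact Finset.mem_univ _
    · intro s _
      exact hcastval s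
    · intro i hi
      exact ZMod.val_cast_of_lt (Finset.mem_range.1 hi)
    · intro s _
      rfl
  -- Lemma B
  have hB : ∀ t : ZMod p, t ≠ 0 → ∑ k ∈ Finset.range (p - 1), E (ρ ^ k * t) = -1 := by
    intro t ht
    have hinj : Set.InjOn (fun k => ρ ^ k * t) ↑(Finset.range (p - 1)) := by
      intro a ha b hb hab
      apply hρinj ha hb
      simp only at hab ⊢
      exact mul_right_cancel₀ ht hab
    have h0 : ∀ k ∈ Finset.range (p - 1), ρ ^ k * t ≠ 0 :=
      fun k _ => mul_ne_zero (pow_ne_zero _ hρ0) ht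
    have himg := image_eq_erase_zero p _ hinj h0
    have hsi : ∑ s0 ∈ (Finset.range (p - 1)).image (fun k => ρ ^ k * t), E s0
        = ∑ k ∈ Finset.range (p - 1), E (ρ ^ k * t) :=
      Finset.sum_image (fun a ha b hb hab =>
        hinj (Finset.mem_coe.2 ha) (Finset.mem_coe.2 hb) hab)
    rw [← hsi, himg]
    have hadd := Finset.add_sum_erase Finset.univ E (Finset.mem_univ (0 : ZMod p))
    rw [hEuniv, hE0] at hadd
    linear_combination hadd
  have hB0 : ∑ k ∈ Finset.range (p - 1), E (ρ ^ k * 0) = ((p : L) - 1) := by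
    simp only [mul_zero, hE0, Finset.sum_const, Finset.card_range, nsmul_eq_mul, mul_one]
    have : ((p - 1 : ℕ) : L) = (p : L) - 1 := by
      have := Nat.cast_sub (R := L) hp1.le
      simpa using this
    exact this
  -- product formula: ∏_{k<p-1} (1 - E (ρ^k)) = p
  have hprodρ : ∏ k ∈ Finset.range (p - 1), (1 - E (ρ ^ k)) = (p : L) := by
    have himg := image_eq_erase_zero p (fun k => ρ ^ k) hρinj
      (fun k _ => pow_ne_zero _ hρ0)
    have hinj2 : Set.InjOn (fun k : ℕ => ((k + 1 : ℕ) : ZMod p)) ↑(Finset.range (p - 1)) := by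
      intro a ha b hb hab
      simp only [Finset.coe_range, Set.mem_Iio] at ha hb
      simp only at hab
      have h1 := congrArg ZMod.val hab
      rw [ZMod.val_cast_of_lt (by omega), ZMod.val_cast_of_lt (by omega)] at h1
      omega
    have h02 : ∀ k ∈ Finset.range (p - 1), ((k + 1 : ℕ) : ZMod p) ≠ 0 := by
      intro k hk h
      rw [ZMod.natCast_eq_zero_iff] at h
      have := Nat.le_of_dvd (by omega) h
      simp only [Finset.mem_range] at hk
      omega
    have himg2 := image_eq_erase_zero p _ hinj2 h02
    have hpi1 : ∏ s0 ∈ (Finset.range (p - 1)).image (fun k => ρ ^ k), (1 - E s0)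
        = ∏ k ∈ Finset.range (p - 1), (1 - E (ρ ^ k)) :=
      Finset.prod_image (fun a ha b hb hab =>
        hρinj (Finset.mem_coe.2 ha) (Finset.mem_coe.2 hb) hab)
    have hpi2 : ∏ s0 ∈ (Finset.range (p - 1)).image (fun k : ℕ => ((k + 1 : ℕ) : ZMod p)), (1 - E s0)
        = ∏ k ∈ Finset.range (p - 1), (1 - E ((k + 1 : ℕ) : ZMod p)) :=
      Finset.prod_image (fun a ha b hb hab =>
        hinj2 (Finset.mem_coe.2 ha) (Finset.mem_coe.2 hb) hab)
    rw [← hpi1, himg, ← himg2, hpi2]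
    have hfin : ∏ k ∈ Finset.range (p - 1), (1 - ζ ^ (k + 1)) = (p : L) := by
      have hμ : IsPrimitiveRoot ζ ((p - 1) + 1) := by
        rw [show (p - 1) + 1 = p by omega]
        exact hζ
      have := hμ.prod_one_sub_pow_eq_order
      rw [this]
      push_cast [show (p - 1) + 1 = p by omega]
      have : ((p - 1 : ℕ) : L) = (p : L) - 1 := by
        have := Nat.cast_sub (R := L) hp1.le
        simpa using this
      rw [this]; ring
    rw [← hfin]
    apply Finset.prod_congr rfl
    intro k _
    rw [hEnat]
  -- E of a finite sum
  have hEfs : ∀ (sf : Finset ℕ) (f : ℕ → ZMod p), ∏ k ∈ sf, E (f k) = E (∑ k ∈ sf, f k) := by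
    intro sf f
    induction sf using Finset.cons_induction with
    | empty => simp [hE0]
    | cons a s ha ih => rw [Finset.prod_cons, Finset.sum_cons, hEadd, ih]
  -- C^2 = (-1)^m * p
  have hC2 : C ^ 2 = (-1) ^ m * (p : L) := by
    have hsplit : ∏ k ∈ Finset.range (p - 1), (1 - E (ρ ^ k))
        = α * ∏ k ∈ Finset.range m, (1 - E (ρ ^ (m + k))) := by
      rw [show p - 1 = m + m by omega, Finset.prod_range_add]
    have hterm : ∀ k : ℕ, (1 : L) - E (ρ ^ (m + k)) = -E (-(ρ ^ k)) * (1 - E (ρ ^ k)) := by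
      intro k
      have h1 : ρ ^ (m + k) = -(ρ ^ k) := by rw [pow_add, hρm]; ring
      rw [h1]
      linear_combination -(hEneg (ρ ^ k))
    have hprod2 : ∏ k ∈ Finset.range m, (1 - E (ρ ^ (m + k)))
        = (-1) ^ m * E (∑ k ∈ Finset.range m, -(ρ ^ k)) * α := by
      calc ∏ k ∈ Finset.range m, (1 - E (ρ ^ (m + k)))
          = ∏ k ∈ Finset.range m, (-E (-(ρ ^ k)) * (1 - E (ρ ^ k))) :=
            Finset.prod_congr rfl (fun k _ => hterm k)
      _ = ∏ k ∈ Finset.range m, (((-1 : L) * E (-(ρ ^ k))) * (1 - E (ρ ^ k))) :=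
            Finset.prod_congr rfl (fun k _ => by ring)
      _ = (∏ k ∈ Finset.range m, ((-1 : L) * E (-(ρ ^ k)))) * ∏ k ∈ Finset.range m, (1 - E (ρ ^ k)) :=
            Finset.prod_mul_distrib
      _ = ((∏ _k ∈ Finset.range m, (-1 : L)) * ∏ k ∈ Finset.range m, E (-(ρ ^ k))) * α := by
            rw [Finset.prod_mul_distrib, hαdef]
      _ = (-1) ^ m * E (∑ k ∈ Finset.range m, -(ρ ^ k)) * α := by
            rw [Finset.prod_const, Finset.card_range, hEfs]
    have hgeosum : ∑ k ∈ Finset.range m, -(ρ ^ k) = lamZ + lamZ := by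
      have hg := geom_sum_mul ρ m
      rw [hρm] at hg
      -- hg : (∑ i ∈ range m, ρ ^ i) * (ρ - 1) = -1 - 1
      have h2 : (∑ i ∈ Finset.range m, ρ ^ i) * ((ρ - 1) * lamZ) = (-1 - 1) * lamZ := by
        rw [← mul_assoc, hg]
      rw [mul_comm (ρ - 1) lamZ, hlamZ, mul_one] at h2
      rw [Finset.sum_neg_distrib, h2]
      ring
    have hfinal : (p : L) = (-1) ^ m * C ^ 2 := by
      rw [← hprodρ, hsplit, hprod2, hgeosum, hEadd, hCdef]
      ring
    have hsq : ((-1 : L) ^ m) * ((-1) ^ m) = 1 := by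
      rw [← pow_add]
      exact Even.neg_one_pow ⟨m, rfl⟩
    calc C ^ 2 = ((-1 : L) ^ m * (-1) ^ m) * C ^ 2 := by rw [hsq, one_mul]
    _ = (-1) ^ m * (p : L) := by rw [hfinal]; ring
  -- T(c)
  have hT : ∀ c : ℕ, ∑ k ∈ Finset.range (p - 1), Z k * Z (k + c)
      = (-1) ^ (c + m) * (p : L) ^ 2 * (if ρ ^ c = -1 then 2 else 1) := by
    intro c
    have hterm : ∀ k : ℕ, Z k * Z (k + c) = (-1) ^ c * C ^ 2 *
        ((1 : L) - E (ρ ^ k * 1) - E (ρ ^ k * ρ ^ c) + E (ρ ^ k * (1 + ρ ^ c))) := by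
      intro k
      have e : E (ρ ^ k) * E (ρ ^ k * ρ ^ c) = E (ρ ^ k * (1 + ρ ^ c)) := by
        rw [← hEadd]
        congr 1
        ring
      have hsq : ((-1 : L) ^ k) * ((-1) ^ k) = 1 := by
        rw [← pow_add]
        exact Even.neg_one_pow ⟨k, rfl⟩
      rw [hZdef]
      simp only
      rw [pow_add ρ k c, pow_add (-1 : L) k c, mul_one (ρ ^ k)]
      linear_combination ((-1 : L) ^ c * C ^ 2 * (1 - E (ρ ^ k)) * (1 - E (ρ ^ k * ρ ^ c))) * hsq
        + ((-1 : L) ^ c * C ^ 2) * e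
    have hsc : ∑ k ∈ Finset.range (p - 1), Z k * Z (k + c)
        = ∑ k ∈ Finset.range (p - 1), ((-1) ^ c * C ^ 2 *
          ((1 : L) - E (ρ ^ k * 1) - E (ρ ^ k * ρ ^ c) + E (ρ ^ k * (1 + ρ ^ c)))) :=
      Finset.sum_congr rfl (fun k _ => hterm k)
    rw [hsc, ← Finset.mul_sum]
    have hsplitsum : ∑ k ∈ Finset.range (p - 1),
        ((1 : L) - E (ρ ^ k * 1) - E (ρ ^ k * ρ ^ c) + E (ρ ^ k * (1 + ρ ^ c)))
        = (((p : L) - 1) - (-1) - (-1)) + ∑ k ∈ Finset.range (p - 1), E (ρ ^ k * (1 + ρ ^ c)) := by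
      rw [Finset.sum_add_distrib, Finset.sum_sub_distrib, Finset.sum_sub_distrib]
      rw [Finset.sum_const, Finset.card_range, hB 1 one_ne_zero, hB (ρ ^ c) (pow_ne_zero _ hρ0)]
      congr 1
      congr 1
      have : ((p - 1 : ℕ) : L) = (p : L) - 1 := by
        have := Nat.cast_sub (R := L) hp1.le
        simpa using this
      rw [nsmul_eq_mul, mul_one, this]
    rw [hsplitsum]
    by_cases hc : ρ ^ c = -1
    · have h10 : (1 : ZMod p) + ρ ^ c = 0 := by rw [hc]; ring
      rw [h10, hB0, if_pos hc, hC2, pow_add]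
      ring
    · have h10 : (1 : ZMod p) + ρ ^ c ≠ 0 := by
        intro h
        exact hc (by linear_combination h)
      rw [hB (1 + ρ ^ c) h10, if_neg hc, hC2, pow_add]
      ring
  -- X = conjugates of x
  set X : ℕ → L := fun i => ∑ a ∈ Finset.range q, Z (i + (a + 1) * n) with hXdef
  have hXx : ∀ i : ℕ, (σ ^ i) x = X i := by
    intro i
    rw [hx, map_sum]
    apply Finset.sum_congr rfl
    intro a _
    rw [← AlgEquiv.mul_apply, ← pow_add, hzk (i + (a + 1) * n)]
  have hXstep : ∀ i : ℕ, X (i + n) = X i := by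
    intro i
    have hgq : Z (i + (q + 1) * n) = Z (i + (0 + 1) * n) := by
      have e : i + (q + 1) * n = (i + (0 + 1) * n) + (p - 1) := by
        rw [hq]; ring
      rw [e, hZper]
    have key : ∑ a ∈ Finset.range q, Z (i + ((a + 1) + 1) * n)
        = ∑ a ∈ Finset.range q, Z (i + (a + 1) * n) := by
      have e1 := Finset.sum_range_succ' (fun a => Z (i + (a + 1) * n)) q
      have e2 := Finset.sum_range_succ (fun a => Z (i + (a + 1) * n)) q
      rw [e2] at e1
      rw [hgq] at e1
      exact (add_right_cancel e1).symm
    show ∑ a ∈ Finset.range q, Z ((i + n) + (a + 1) * n) = ∑ a ∈ Finset.range q, Z (i + (a + 1) * n)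
    rw [← key]
    apply Finset.sum_congr rfl
    intro a _
    congr 1
    ring
  have hXpern : ∀ (a i : ℕ), X (i + a * n) = X i := by
    intro a
    induction a with
    | zero => intro i; simp
    | succ a ih =>
      intro i
      have e : i + (a + 1) * n = (i + a * n) + n := by ring
      rw [e, hXstep, ih]
  -- the master reduction
  have master : ∀ j : ℕ, ∑ i ∈ Finset.range n, (σ ^ i) (x * (σ ^ j) x)
      = ∑ b ∈ Finset.range q, ∑ k ∈ Finset.range (p - 1), Z k * Z (k + (j + (b + 1) * n)) := by
    intro j
    set F : ℕ → L := fun k => Z k * X (k + j) with hFdef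
    have hFper : ∀ k, F (k + (p - 1)) = F k := by
      intro k
      rw [hFdef]
      simp only
      rw [hZper]
      congr 1
      have e : k + (p - 1) + j = (k + j) + q * n := by rw [hq]; ring
      rw [e, hXpern q (k + j)]
    have hstep1 : ∀ i ∈ Finset.range n, (σ ^ i) (x * (σ ^ j) x)
        = ∑ a ∈ Finset.range q, F (i + (a + 1) * n) := by
      intro i _
      have hσσ : (σ ^ i) ((σ ^ j) x) = X (i + j) := by
        rw [← AlgEquiv.mul_apply, ← pow_add, hXx]
      rw [map_mul, hσσ, hXx i, hXdef]
      simp only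
      rw [Finset.sum_mul]
      apply Finset.sum_congr rfl
      intro a _
      rw [hFdef]
      simp only
      congr 1
      have e : i + (a + 1) * n + j = (i + j) + (a + 1) * n := by ring
      rw [e, hXpern (a + 1) (i + j)]
    have hs2 : ∑ i ∈ Finset.range n, (σ ^ i) (x * (σ ^ j) x)
        = ∑ i ∈ Finset.range n, ∑ a ∈ Finset.range q, F (i + (a + 1) * n) :=
      Finset.sum_congr rfl hstep1
    have hs3 : ∑ i ∈ Finset.range n, ∑ a ∈ Finset.range q, F (i + (a + 1) * n)
        = ∑ i ∈ Finset.range n, ∑ a ∈ Finset.range q, F ((i + a * n) + n) := by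
      apply Finset.sum_congr rfl
      intro i _
      apply Finset.sum_congr rfl
      intro a _
      congr 1
      ring
    have hs4' : ∑ i ∈ Finset.range n, ∑ a ∈ Finset.range q, F ((i + a * n) + n)
        = ∑ k ∈ Finset.range (n * q), F (k + n) := by
      simpa using sum_grid (fun k => F (k + n)) n q (by omega)
    rw [hs2, hs3, hs4', ← hq, sum_range_shift F (p - 1) hFper n]
    -- now ∑ k < p-1, F k ; expand X
    have hs4 : ∀ k, F k = ∑ b ∈ Finset.range q, Z k * Z (k + (j + (b + 1) * n)) := by
      intro k
      rw [hFdef]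
      simp only
      rw [hXdef]
      simp only
      rw [Finset.mul_sum]
      apply Finset.sum_congr rfl
      intro b _
      congr 2
      ring
    rw [Finset.sum_congr rfl (fun k _ => hs4 k)]
    exact Finset.sum_comm
  -- conditions for the special term
  have hq2 : 2 ≤ q := by omega
  have hn0 : 0 < n := by omega
  have hm0 : 0 < m := by omega
  have hfwd : ∀ b, b < q → ρ ^ ((b + 1) * n) = -1 → b = q / 2 - 1 := by
    intro b hb hc
    have h1 : ρ ^ ((b + 1) * n + m) = 1 := by rw [pow_add, hc, hρm]; ring
    have hd := orderOf_dvd_of_pow_eq_one h1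
    rw [hr] at hd
    obtain ⟨e, he⟩ := hd
    have hqn : q * n = 2 * m := by
      have := mul_comm q n
      omega
    have hbn : (b + 1) * n ≤ 2 * m := by
      calc (b + 1) * n ≤ q * n := Nat.mul_le_mul_right n (by omega)
      _ = 2 * m := hqn
    rcases Nat.lt_or_ge e 2 with h2 | h2
    · interval_cases e
      · omega
      · have h3 : (b + 1) * n = n * (q / 2) := by omega
        have h3' : n * (b + 1) = n * (q / 2) := by rw [mul_comm]; exact h3
        have h4 := Nat.eq_of_mul_eq_mul_left hn0 h3'
        omega
    · have h5 : (p - 1) * 2 ≤ (p - 1) * e := Nat.mul_le_mul_left _ h2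
      rw [← he] at h5
      omega
  have hfwd2 : ∀ j b : ℕ, ρ ^ (j + (b + 1) * n) = -1 → n ∣ j := by
    intro j b hc
    have h1 : ρ ^ (j + (b + 1) * n + m) = 1 := by rw [pow_add, hc, hρm]; ring
    have hd := orderOf_dvd_of_pow_eq_one h1
    rw [hr] at hd
    have hnd : n ∣ j + (b + 1) * n + m := dvd_trans hpn' hd
    have h3 : n ∣ m := ⟨q / 2, hmn⟩
    have h4 : n ∣ j + (b + 1) * n := by
      have := Nat.dvd_sub hnd h3
      rwa [Nat.add_sub_cancel] at this
    have h2 : n ∣ (b + 1) * n := dvd_mul_left n (b + 1)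
    have := Nat.dvd_sub h4 h2
    rwa [Nat.add_sub_cancel] at this
  -- alternating sum vanishes
  have halt : ∀ d : ℕ, ∑ b ∈ Finset.range q, ((-1 : L) ^ (n * (b + 1) + d)) = 0 := by
    intro d
    have h1 : ∀ b : ℕ, (-1 : L) ^ (n * (b + 1) + d) = (-1) ^ b * (-(-1) ^ d) := by
      intro b
      rw [pow_add, pow_mul, Odd.neg_one_pow hnodd, pow_succ]
      ring
    rw [Finset.sum_congr rfl (fun b _ => h1 b), ← Finset.sum_mul, neg_one_geom_sum,
      if_pos ⟨q / 2, by omega⟩, zero_mul]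
  have hmm1 : (-1 : L) ^ (m + m) = 1 := Even.neg_one_pow ⟨m, rfl⟩
  constructor
  · -- first claim
    have h0 : ∀ i ∈ Finset.range n, (σ ^ i) (x * x) = (σ ^ i) (x * (σ ^ (0 : ℕ)) x) := by
      intro i _
      rw [pow_zero, AlgEquiv.one_apply]
    rw [Finset.sum_congr rfl h0, master 0]
    have hTb : ∀ b ∈ Finset.range n, True := fun _ _ => trivial
    have hTb1 : ∀ b ∈ Finset.range q,
        ∑ k ∈ Finset.range (p - 1), Z k * Z (k + (0 + (b + 1) * n))
        = (-1 : L) ^ (n * (b + 1) + m) * (p : L) ^ 2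
          + (if b = q / 2 - 1 then ((p : L)) ^ 2 else 0) := by
      intro b hb
      have hbq : b < q := Finset.mem_range.1 hb
      rw [hT (0 + (b + 1) * n)]
      by_cases hb0 : b = q / 2 - 1
      · have he1 : (b + 1) * n = m := by
          have : n * (b + 1) = n * (q / 2) := by
            rw [hb0]
            congr 1
            omega
          rw [mul_comm]
          omega
        rw [if_pos (by rw [Nat.zero_add, he1]; exact hρm), if_pos hb0]
        rw [Nat.zero_add, he1, show n * (b + 1) + m = m + m by rw [mul_comm]; omega, hmm1]
        ring
      · rw [if_neg (fun hc => hb0 (hfwd b hbq (by rwa [Nat.zero_add] at hc))), if_neg hb0]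
        rw [show 0 + (b + 1) * n + m = n * (b + 1) + m by ring]
        ring
    rw [Finset.sum_congr rfl hTb1, Finset.sum_add_distrib]
    have hs1 : ∑ b ∈ Finset.range q, (-1 : L) ^ (n * (b + 1) + m) * (p : L) ^ 2 = 0 := by
      rw [← Finset.sum_mul, halt m, zero_mul]
    have hs2 : ∑ b ∈ Finset.range q, (if b = q / 2 - 1 then ((p : L)) ^ 2 else 0) = (p : L) ^ 2 := by
      rw [Finset.sum_ite_eq' (Finset.range q) (q / 2 - 1) (fun _ => ((p : L)) ^ 2)]
      rw [if_pos (Finset.mem_range.2 (by omega))]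
    rw [hs1, hs2, zero_add]
  · -- second claim
    intro j hj
    rw [master j]
    have hTb2 : ∀ b ∈ Finset.range q,
        ∑ k ∈ Finset.range (p - 1), Z k * Z (k + (j + (b + 1) * n))
        = (-1 : L) ^ (n * (b + 1) + (j + m)) * (p : L) ^ 2 := by
      intro b _
      rw [hT (j + (b + 1) * n)]
      rw [if_neg (fun hc => hj (hfwd2 j b hc))]
      rw [show j + (b + 1) * n + m = n * (b + 1) + (j + m) by ring]
      ring
    rw [Finset.sum_congr rfl hTb2, ← Finset.sum_mul, halt (j + m), zero_mul]
end

section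
/- The ℤ-module J = ⟨z, σ(z), ..., σ^{p-2}(z)⟩_ℤ inside ℤ[ζ_p], where z = ζ_p^λ α (1-ζ_p), is an ideal of ℤ[ζ_p]: for every j ∈ J, j·ζ_p ∈ J. -/
/-- The ℤ-module `J = ⟨z, σ(z), ..., σ^{p-2}(z)⟩_ℤ` in `ℤ[ζ_p]`, where
`z = ζ^λ α (1-ζ)`, is an ideal: multiplying any element of `J` by `ζ` stays in `J`. -/
theorem stmt5 (p : ℕ) (hp : p.Prime) (hodd : Odd p)
    (L : Type*) [Field L] [CharZero L]
    (ζ : L) (hζ : IsPrimitiveRoot ζ p)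
    (r : ℕ) (hr : orderOf (r : ZMod p) = p - 1)
    (lam : ℤ) (hlam : ((lam * ((r : ℤ) - 1) : ℤ) : ZMod p) = 1)
    (σ : L ≃ₐ[ℚ] L) (hσ : σ ζ = ζ ^ r)
    (z : L)
    (hz : z = ζ ^ lam * (∏ j ∈ Finset.range ((p - 1) / 2), (1 - ζ ^ r ^ j)) * (1 - ζ))
    (J : Submodule ℤ L)
    (hJ : J = Submodule.span ℤ {y | ∃ i < p - 1, y = (σ ^ i) z}) :
    ∀ j ∈ J, j * ζ ∈ J := by
  haveI : Fact p.Prime := ⟨hp⟩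
  have hp2 := hp.two_le
  have hp3 : 3 ≤ p := by
    rcases hodd with ⟨k, hk⟩; omega
  have hζp : ζ ^ p = 1 := hζ.pow_eq_one
  have hζ0 : ζ ≠ 0 := fun h => by simp [h, zero_pow (by omega : p ≠ 0)] at hζp
  have hζ1 : ζ ≠ 1 := by
    intro h
    exact hζ.pow_ne_one_of_pos_of_lt (l := 1) one_ne_zero (by omega) (by rw [pow_one, h])
  have h1ζ : (1 : L) - ζ ≠ 0 := sub_ne_zero.2 (Ne.symm hζ1)
  -- ζ powers mod p
  have hmod : ∀ a : ℕ, ζ ^ a = ζ ^ (a % p) := by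
    intro a
    conv_lhs => rw [← Nat.div_add_mod a p]
    rw [pow_add, pow_mul, hζp, one_pow, one_mul]
  have hmodeq : ∀ a b : ℕ, ((a : ZMod p) = (b : ZMod p)) → ζ ^ a = ζ ^ b := by
    intro a b hab
    rw [ZMod.natCast_eq_natCast_iff] at hab
    rw [hmod a, hmod b, hab]
  have hzint : ∀ k : ℤ, (p : ℤ) ∣ k → ζ ^ k = 1 := by
    intro k ⟨m, hm⟩
    rw [hm, zpow_mul, zpow_natCast, hζp, one_zpow]
  -- r^((p-1)/2) ≡ -1 (mod p)
  have hru : (r : ZMod p) ≠ 0 := by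
    intro h
    have h0 : orderOf (0 : ZMod p) = 0 :=
      orderOf_eq_zero_iff'.2 fun n hn => by
        rw [zero_pow hn.ne']; exact zero_ne_one
    rw [h, h0] at hr
    omega
  have hhalf : ((r : ZMod p)) ^ ((p - 1) / 2) = -1 := by
    have hx2 : (((r : ZMod p)) ^ ((p - 1) / 2)) ^ 2 = 1 := by
      rw [← pow_mul]
      have : (p - 1) / 2 * 2 = p - 1 := by
        rcases hodd with ⟨k, hk⟩; omega
      rw [this, ← hr, pow_orderOf_eq_one]
    have hx2' : ((r : ZMod p) ^ ((p - 1) / 2)) * ((r : ZMod p) ^ ((p - 1) / 2)) = 1 := by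
      rw [← pow_two]; exact hx2
    rcases mul_self_eq_one_iff.1 hx2' with h | h
    · exfalso
      have := orderOf_le_of_pow_eq_one (x := (r : ZMod p)) (n := (p - 1) / 2)
        (by omega) h
      omega
    · exact h
  -- the quantities α and β
  set α := ∏ j ∈ Finset.range ((p - 1) / 2), (1 - ζ ^ r ^ j) with hα
  set β := ζ ^ lam * α with hβ
  have hzβ : z = β * (1 - ζ) := by rw [hz, hβ]
  -- σ acting on powers of ζ
  have hσpow : ∀ m : ℕ, σ (ζ ^ m) = ζ ^ (r * m) := by
    intro m
    rw [map_pow, hσ, ← pow_mul]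
  -- σ α = -ζ⁻¹ * α
  have hσα : σ α = -ζ⁻¹ * α := by
    have hmapped : σ α = ∏ j ∈ Finset.range ((p - 1) / 2), (1 - ζ ^ r ^ (j + 1)) := by
      rw [hα, map_prod]
      refine Finset.prod_congr rfl fun j _ => ?_
      rw [map_sub, map_one, hσpow, pow_succ, mul_comm (r ^ j) r]
    have htel : (1 - ζ) * ∏ j ∈ Finset.range ((p - 1) / 2), (1 - ζ ^ r ^ (j + 1))
        = (1 - ζ ^ r ^ ((p - 1) / 2)) * α := by
      have h1 := Finset.prod_range_succ' (fun j => (1 - ζ ^ r ^ j)) ((p - 1) / 2)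
      have h2 := Finset.prod_range_succ (fun j => (1 - ζ ^ r ^ j)) ((p - 1) / 2)
      simp only [pow_zero, pow_one] at h1
      rw [← hα] at h2
      rw [h2] at h1
      linear_combination -h1
    have hrq : ζ ^ r ^ ((p - 1) / 2) = ζ ^ (p - 1) := by
      apply hmodeq
      push_cast
      rw [hhalf]
      have : ((p : ZMod p)) = 0 := ZMod.natCast_self p
      have hcast : (((p - 1 : ℕ)) : ZMod p) = (p : ZMod p) - 1 := by
        push_cast [Nat.cast_sub (by omega : 1 ≤ p)]; ring
      rw [hcast, this]; ring
    have hζp1 : ζ ^ (p - 1) = ζ⁻¹ := by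
      field_simp
      rw [← pow_succ]
      have : p - 1 + 1 = p := by omega
      rw [this, hζp]
    have h2 : (1 - ζ) * σ α = (-ζ⁻¹ * (1 - ζ)) * α := by
      rw [hmapped, htel, hrq, hζp1]
      have : (1 : L) - ζ⁻¹ = -ζ⁻¹ * (1 - ζ) := by
        rw [neg_mul, mul_sub, mul_one, inv_mul_cancel₀ hζ0]
        ring
      rw [this]
    exact mul_left_cancel₀ h1ζ (h2.trans (by ring))
  -- σ β = -β
  have hσβ : σ β = -β := by
    have hσζlam : σ (ζ ^ lam) = (ζ ^ (r : ℕ)) ^ lam := by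
      rw [map_zpow₀, hσ]
    have hcalc : (ζ ^ (r : ℕ)) ^ lam * ζ⁻¹ = ζ ^ lam := by
      rw [← zpow_natCast ζ r, ← zpow_mul, ← zpow_neg_one ζ, ← zpow_add₀ hζ0]
      have hdvd : (p : ℤ) ∣ ((r : ℤ) * lam + -1 - lam) := by
        have : ((lam * ((r : ℤ) - 1) - 1 : ℤ) : ZMod p) = 0 := by
          rw [Int.cast_sub, hlam, Int.cast_one, sub_self]
        have := (ZMod.intCast_zmod_eq_zero_iff_dvd _ _).1 this
        convert this using 1; ring
      obtain ⟨m, hm⟩ := hdvd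
      have : (r : ℤ) * lam + -1 = lam + p * m := by linarith [hm]
      rw [this, zpow_add₀ hζ0, hzint _ ⟨m, rfl⟩, mul_one]
    rw [hβ, map_mul, hσζlam, hσα]
    rw [← hcalc]
    ring
  -- the conjugates of z
  have hg : ∀ i : ℕ, (σ ^ i) z = (-1 : L) ^ i * (β * (1 - ζ ^ r ^ i)) := by
    intro i
    induction i with
    | zero => simp [hzβ]
    | succ n ih =>
      rw [pow_succ', AlgEquiv.mul_apply, ih]
      rw [map_mul, map_mul, map_pow, map_neg, map_one, hσβ, map_sub, map_one, hσpow]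
      have hre : r ^ (n + 1) = r * r ^ n := by rw [pow_succ, mul_comm]
      rw [hre]
      ring
  -- key: β * (1 - ζ^a) ∈ J for every a
  have key : ∀ a : ℕ, β * (1 - ζ ^ a) ∈ J := by
    intro a
    by_cases h0 : a % p = 0
    · rw [hmod a, h0]
      simp
    · -- find i < p - 1 with r^i ≡ a (mod p)
      have hane : ((a : ZMod p)) ≠ 0 := by
        intro h
        obtain ⟨c, rfl⟩ := (ZMod.natCast_eq_zero_iff a p).1 h
        simp [Nat.mul_mod_right] at h0
      obtain ⟨i, hi, hri⟩ : ∃ i < p - 1, (r : ZMod p) ^ i = (a : ZMod p) := by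
        have hruI : IsUnit (r : ZMod p) := by
          by_contra h
          rw [orderOf_eq_zero_iff.2 (fun hf => h hf.isUnit)] at hr
          omega
        set u := hruI.unit with hu
        have hou : orderOf u = p - 1 := by rw [← orderOf_units, hruI.unit_spec, hr]
        have htop : Subgroup.zpowers u = ⊤ := by
          apply Subgroup.eq_top_of_card_eq
          rw [Nat.card_zpowers, hou, Nat.card_eq_fintype_card, ZMod.card_units]
        have hau : IsUnit ((a : ZMod p)) := hane.isUnit
        have hmem : hau.unit ∈ Subgroup.zpowers u := htop ▸ Subgroup.mem_top _
        rw [← mem_powers_iff_mem_zpowers] at hmem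
        obtain ⟨k, hk⟩ := hmem
        refine ⟨k % (p - 1), Nat.mod_lt _ (by omega), ?_⟩
        have hmo : u ^ (k % orderOf u) = u ^ k := pow_mod_orderOf u k
        rw [hou] at hmo
        have h2 : u ^ (k % (p-1)) = hau.unit := hmo.trans hk
        calc (r : ZMod p) ^ (k % (p-1)) = ((u ^ (k % (p-1)) : (ZMod p)ˣ) : ZMod p) := by
              rw [Units.val_pow_eq_pow_val, hruI.unit_spec]
          _ = (a : ZMod p) := by rw [h2, hau.unit_spec]
      have hζeq : ζ ^ (r ^ i) = ζ ^ a := hmodeq _ _ (by push_cast; exact hri)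
      have hmemJ : (σ ^ i) z ∈ J := by
        rw [hJ]
        exact Submodule.subset_span ⟨i, hi, rfl⟩
      have : β * (1 - ζ ^ a) = ((-1 : ℤ) ^ i) • ((σ ^ i) z) := by
        rw [hg i, hζeq, zsmul_eq_mul]
        push_cast
        rw [← mul_assoc, ← pow_add, ← two_mul, pow_mul]
        norm_num
      rw [this]
      exact J.smul_mem _ hmemJ
  -- main argument
  intro j hj
  rw [hJ] at hj
  induction hj using Submodule.span_induction with
  | mem x hx =>
    obtain ⟨i, hi, rfl⟩ := hx
    have heq : (σ ^ i) z * ζ = ((-1 : ℤ) ^ i) • (β * (1 - ζ ^ (r ^ i + 1)) - β * (1 - ζ ^ 1)) := by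
      rw [hg i, zsmul_eq_mul]
      push_cast
      rw [pow_succ]
      ring
    rw [heq]
    exact J.smul_mem _ (sub_mem (key _) (key 1))
  | zero => rw [zero_mul]; exact J.zero_mem
  | add x y _ _ hx hy => rw [add_mul]; exact J.add_mem hx hy
  | smul c x _ hx => rw [smul_mul_assoc]; exact J.smul_mem c hx
end

section
/- The ℤ-module I = ⟨x, σ(x), ..., σ^{n-1}(x)⟩_ℤ, where x = Tr_{Q(ζ_p)/K}(z), is an ideal of the ring of integers O_K of K. -/
set_option maxHeartbeats 1000000 in
private lemma stmt6_aux_units (p : ℕ+) (hp : (p:ℕ).Prime) (r : ℕ)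
    (hr : orderOf (r : ZMod p) = (p:ℕ) - 1)
    (s : ℕ) (hs : ¬ (p:ℕ) ∣ s) : ∃ m : ℕ, ((r:ZMod p))^m = (s : ZMod p) := by
  haveI := Fact.mk hp
  have hp1 : 1 < (p:ℕ) := hp.one_lt
  have hrne : (r : ZMod p) ≠ 0 := by
    intro h
    have h2 := pow_orderOf_eq_one (r : ZMod p)
    rw [hr, h, zero_pow (by omega)] at h2
    exact zero_ne_one h2
  have hsne : (s : ZMod p) ≠ 0 := by
    rwa [Ne, ZMod.natCast_eq_zero_iff]
  set ru : (ZMod p)ˣ := Units.mk0 _ hrne with hru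
  set su : (ZMod p)ˣ := Units.mk0 _ hsne with hsu
  have hor : orderOf ru = Fintype.card (ZMod p)ˣ := by
    rw [← orderOf_units, ZMod.card_units_eq_totient, Nat.totient_prime hp]
    exact hr
  have htop : Subgroup.zpowers ru = ⊤ := by
    apply Subgroup.eq_top_of_card_eq
    rw [Nat.card_zpowers, hor, Nat.card_eq_fintype_card]
  have hmem : su ∈ Subgroup.zpowers ru := htop ▸ Subgroup.mem_top su
  rw [← mem_powers_iff_mem_zpowers] at hmem
  obtain ⟨m, hm⟩ := hmem
  exact ⟨m, by simpa [hru, hsu, Units.ext_iff] using hm⟩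

set_option maxHeartbeats 4000000 in
/-- The ℤ-module `I = ⟨x, σ(x), ..., σ^{n-1}(x)⟩_ℤ`, where `x = Tr_{ℚ(ζ_p)/K}(z)`,
is an ideal of the ring of integers `O_K` of the degree-`n` field `K` fixed by `σ^n`:
`I` consists of algebraic integers of `K` and is stable under multiplication by
algebraic integers of `K`. -/
theorem stmt6 (p : ℕ+) (hp : (p : ℕ).Prime) (n : ℕ) (hn1 : 1 < n) (hnodd : Odd n)
    (hpn : (p : ℕ) % n = 1)
    (ζ : CyclotomicField p ℚ) (hζ : IsPrimitiveRoot ζ p)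
    (r : ℕ) (hr : orderOf (r : ZMod p) = (p : ℕ) - 1)
    (lam : ℤ) (hlam : ((lam * ((r : ℤ) - 1) : ℤ) : ZMod p) = 1)
    (σ : CyclotomicField p ℚ ≃ₐ[ℚ] CyclotomicField p ℚ) (hσ : σ ζ = ζ ^ r)
    (z : CyclotomicField p ℚ)
    (hz : z = ζ ^ lam * (∏ j ∈ Finset.range (((p : ℕ) - 1) / 2), (1 - ζ ^ r ^ j)) * (1 - ζ))
    (x : CyclotomicField p ℚ)
    (hx : x = ∑ j ∈ Finset.range (((p : ℕ) - 1) / n), (σ ^ ((j + 1) * n)) z)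
    (I : Submodule ℤ (CyclotomicField p ℚ))
    (hI : I = Submodule.span ℤ {y | ∃ i < n, y = (σ ^ i) x})
    (K : IntermediateField ℚ (CyclotomicField p ℚ))
    (hK : K = IntermediateField.fixedField (Subgroup.zpowers (σ ^ n))) :
    (∀ y ∈ I, y ∈ K ∧ IsIntegral ℤ y) ∧
      ∀ y ∈ I, ∀ c : CyclotomicField p ℚ, c ∈ K → IsIntegral ℤ c → y * c ∈ I := by
  haveI hfact := Fact.mk hp
  -- basic numerology
  have hn3 : 3 ≤ n := by rcases hnodd with ⟨t, ht⟩; omega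
  have hp2 : (p:ℕ) ≠ 2 := by
    intro h; rw [h] at hpn
    have : 2 % n = 2 := Nat.mod_eq_of_lt (by omega)
    omega
  have hp1 : 1 < (p:ℕ) := hp.one_lt
  have hpodd : Odd (p:ℕ) := hp.odd_of_ne_two hp2
  have hndvd : n ∣ (p:ℕ) - 1 := ⟨(p:ℕ)/n, by have := Nat.div_add_mod (p:ℕ) n; omega⟩
  have hζ0 : ζ ≠ 0 := hζ.ne_zero (by positivity)
  have hζord : orderOf ζ = (p:ℕ) := hζ.eq_orderOf.symm
  have hζp : ζ ^ (p:ℕ) = 1 := hζ.pow_eq_one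
  have hcong : ∀ a b : ℕ, ((a : ZMod p) = (b : ZMod p)) → ζ ^ a = ζ ^ b := by
    intro a b hab
    rw [← pow_mod_orderOf ζ a, ← pow_mod_orderOf ζ b, hζord,
      (ZMod.natCast_eq_natCast_iff' a b p).mp hab]
  have hone_sub : ∀ s : ℕ, ¬ (p:ℕ) ∣ s → (1 : CyclotomicField p ℚ) - ζ ^ s ≠ 0 := by
    intro s hs h
    apply hs
    rw [← hζ.pow_eq_one_iff_dvd]
    linear_combination -h
  have h1ζ : (1 : CyclotomicField p ℚ) - ζ ≠ 0 := by
    have := hone_sub 1 (fun h => by have := Nat.le_of_dvd one_pos h; omega)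
    simpa using this
  have hrdvd : ¬ (p:ℕ) ∣ r := by
    intro h
    have h0 : (r : ZMod p) = 0 := (ZMod.natCast_eq_zero_iff r p).mpr h
    have h2 := pow_orderOf_eq_one (r : ZMod p)
    rw [hr, h0, zero_pow (by omega)] at h2
    exact zero_ne_one h2
  have h1ζr : (1 : CyclotomicField p ℚ) - ζ ^ r ≠ 0 := hone_sub r hrdvd
  have hrq : ζ ^ (r ^ (((p:ℕ) - 1) / 2)) * ζ = 1 := by
    have h1 : ((r : ZMod p)) ^ (((p:ℕ) - 1) / 2) = -1 := by
      have hsq : (((r : ZMod p)) ^ (((p:ℕ) - 1) / 2)) * (((r : ZMod p)) ^ (((p:ℕ) - 1) / 2)) = 1 := by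
        rw [← pow_add]
        have h2 : ((p:ℕ) - 1) / 2 + ((p:ℕ) - 1) / 2 = (p:ℕ) - 1 := by
          rcases hpodd with ⟨t, ht⟩; omega
        rw [h2, ← hr]
        exact pow_orderOf_eq_one _
      rcases mul_self_eq_one_iff.mp hsq with h | h
      · exfalso
        have := orderOf_le_of_pow_eq_one (n := ((p:ℕ) - 1) / 2) (by omega) h
        rw [hr] at this
        omega
      · exact h
    have h2 : ((r ^ (((p:ℕ) - 1) / 2) * 1 : ℕ) : ZMod p) = (((p:ℕ) - 1 : ℕ) : ZMod p) := by
      push_cast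
      rw [h1]
      have h3 : ((p:ℕ) : ZMod p) = 0 := ZMod.natCast_self p
      push_cast [Nat.cast_sub (by omega : 1 ≤ (p:ℕ))]
      rw [h3]; ring
    calc ζ ^ (r ^ (((p:ℕ) - 1) / 2)) * ζ = ζ ^ (r ^ (((p:ℕ) - 1) / 2) * 1) * ζ := by rw [mul_one]
    _ = ζ ^ ((p:ℕ) - 1) * ζ := by rw [hcong _ _ h2]
    _ = ζ ^ ((p:ℕ) - 1 + 1) := by rw [pow_succ]
    _ = 1 := by rw [show (p:ℕ) - 1 + 1 = (p:ℕ) by omega]; exact hζp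
  -- the key identity
  have hσlam : σ (ζ^lam) = ζ^lam * ζ := by
    have hd : (p:ℤ) ∣ lam*((r:ℤ)-1) - 1 := by
      rw [← ZMod.intCast_zmod_eq_zero_iff_dvd, Int.cast_sub, Int.cast_one, hlam, sub_self]
    have h1 : ζ ^ (lam*((r:ℤ)-1) - 1) = 1 := (hζ.zpow_eq_one_iff_dvd _).mpr hd
    calc σ (ζ^lam) = (ζ^(r:ℕ))^lam := by rw [map_zpow₀, hσ]
    _ = ζ^((r:ℤ)*lam) := by rw [← zpow_natCast ζ r, ← zpow_mul]
    _ = ζ^(lam + 1 + (lam*((r:ℤ)-1) - 1)) := by congr 1; ring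
    _ = ζ^lam * ζ := by
        rw [zpow_add₀ hζ0, zpow_add₀ hζ0, h1, mul_one, zpow_one]
  have hσA : σ (∏ j ∈ Finset.range (((p:ℕ)-1)/2), (1 - ζ^(r^j))) * (1-ζ)
      = (∏ j ∈ Finset.range (((p:ℕ)-1)/2), (1 - ζ^(r^j))) * (1 - ζ^(r^(((p:ℕ)-1)/2))) := by
    have hstep : (∏ j ∈ Finset.range (((p:ℕ)-1)/2), σ (1 - ζ^(r^j)))
        = ∏ j ∈ Finset.range (((p:ℕ)-1)/2), (1 - ζ^(r^(j+1))) :=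
      Finset.prod_congr rfl (fun j _ => by
        rw [map_sub, map_one, map_pow, hσ, ← pow_mul, ← pow_succ'])
    calc σ (∏ j ∈ Finset.range (((p:ℕ)-1)/2), (1 - ζ^(r^j))) * (1-ζ)
        = (∏ j ∈ Finset.range (((p:ℕ)-1)/2), (1 - ζ^(r^(j+1)))) * (1 - ζ^(r^0)) := by
          rw [map_prod, hstep, pow_zero, pow_one]
    _ = ∏ j ∈ Finset.range (((p:ℕ)-1)/2 + 1), (1 - ζ^(r^j)) :=
          (Finset.prod_range_succ' (fun j => 1 - ζ ^ r ^ j) (((p:ℕ)-1)/2)).symm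
    _ = _ := Finset.prod_range_succ (fun j => 1 - ζ ^ r ^ j) (((p:ℕ)-1)/2)
  have hbase : (1-ζ) * σ z = -((1 - ζ^r) * z) := by
    calc (1-ζ) * σ z
        = σ (ζ^lam) * ((σ (∏ j ∈ Finset.range (((p:ℕ)-1)/2), (1 - ζ^(r^j)))) * (1-ζ)) * (1 - ζ^r) := by
          rw [hz, map_mul, map_mul, map_sub, map_one, hσ]; ring
    _ = (ζ^lam * ζ) * ((∏ j ∈ Finset.range (((p:ℕ)-1)/2), (1 - ζ^(r^j))) * (1 - ζ^(r^(((p:ℕ)-1)/2)))) * (1 - ζ^r) := by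
          rw [hσA, hσlam]
    _ = -((1 - ζ^r) * z) := by
          rw [hz]
          linear_combination (-(ζ^lam) * (∏ j ∈ Finset.range (((p:ℕ)-1)/2), (1 - ζ^(r^j))) * (1 - ζ^r)) * hrq
  have key : ∀ m : ℕ, (1-ζ) * (σ^m) z = (-1)^m * ((1 - ζ^(r^m)) * z) := by
    intro m
    induction m with
    | zero => simp
    | succ m ih =>
      have hσih := congrArg σ ih
      simp only [map_mul, map_sub, map_one, map_pow, map_neg, hσ, ← pow_mul] at hσih
      rw [show r * r^m = r^(m+1) from (pow_succ' r m).symm] at hσih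
      have happ : (σ^(m+1)) z = σ ((σ^m) z) := by rw [pow_succ', AlgEquiv.mul_apply]
      apply mul_left_cancel₀ h1ζr
      rw [happ]
      linear_combination (1-ζ) * hσih + ((-1)^m * (1 - ζ^(r^(m+1)))) * hbase
  -- σ^(p-1) fixes z
  have hσp1 : (σ^((p:ℕ)-1)) z = z := by
    have h1 : ζ^(r^((p:ℕ)-1)) = ζ := by
      have h2 : ((r^((p:ℕ)-1) : ℕ) : ZMod p) = ((1:ℕ) : ZMod p) := by
        push_cast
        rw [← hr]
        exact pow_orderOf_eq_one _
      simpa using hcong _ 1 h2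
    have heven : ((-1 : CyclotomicField p ℚ))^((p:ℕ)-1) = 1 :=
      Even.neg_one_pow (Nat.Odd.sub_odd hpodd odd_one)
    have h3 := key ((p:ℕ)-1)
    rw [h1, heven, one_mul] at h3
    exact mul_left_cancel₀ h1ζ h3
  -- the module M spanned by all conjugates of z
  set M : Submodule ℤ (CyclotomicField p ℚ) :=
    Submodule.span ℤ (Set.range fun m : ℕ => (σ^m) z) with hM
  have hσmM : ∀ m : ℕ, (σ^m) z ∈ M := fun m => Submodule.subset_span ⟨m, rfl⟩
  have hgen : ∀ s : ℕ, ∃ w ∈ M, (1 - ζ^s) * z = (1-ζ) * w := by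
    intro s
    by_cases hps : (p:ℕ) ∣ s
    · refine ⟨0, zero_mem _, ?_⟩
      rw [(hζ.pow_eq_one_iff_dvd s).mpr hps]
      simp
    · obtain ⟨m, hm⟩ := stmt6_aux_units p hp r hr s hps
      have hζrm : ζ^(r^m) = ζ^s := hcong _ _ (by push_cast; rw [hm])
      have hkey := key m
      rcases Nat.even_or_odd m with hm2 | hm2
      · refine ⟨(σ^m) z, hσmM m, ?_⟩
        rw [hm2.neg_one_pow, one_mul] at hkey
        rw [← hζrm, ← hkey]
      · refine ⟨-((σ^m) z), neg_mem (hσmM m), ?_⟩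
        rw [hm2.neg_one_pow, neg_one_mul] at hkey
        rw [← hζrm]
        linear_combination hkey
  have hζkz : ∀ k : ℕ, ζ^k * z ∈ M := by
    intro k
    obtain ⟨w1, hw1, e1⟩ := hgen (k+1)
    obtain ⟨w2, hw2, e2⟩ := hgen k
    have h0 : (1-ζ) * (ζ^k * z) = (1-ζ) * (w1 - w2) := by
      rw [mul_sub, ← e1, ← e2]
      ring
    rw [mul_left_cancel₀ h1ζ h0]
    exact sub_mem hw1 hw2
  -- multiplication by algebraic integers stabilizes z·(stuff)
  have hczM : ∀ c : CyclotomicField p ℚ, c ∈ Algebra.adjoin ℤ ({ζ} : Set (CyclotomicField p ℚ)) →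
      c * z ∈ M := by
    intro c hc
    rw [Algebra.adjoin_singleton_eq_range_aeval, AlgHom.mem_range] at hc
    obtain ⟨P, hP⟩ := hc
    rw [← hP, Polynomial.aeval_eq_sum_range, Finset.sum_mul]
    apply Submodule.sum_mem
    intro k _
    rw [smul_mul_assoc]
    exact Submodule.smul_mem _ _ (hζkz k)
  -- the trace is well behaved
  have happow : ∀ (a b : ℕ) (w : CyclotomicField p ℚ), (σ^(a+b)) w = (σ^a) ((σ^b) w) := by
    intro a b w
    rw [pow_add, AlgEquiv.mul_apply]
  have hσnx : (σ^n) x = x := by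
    have hfe : (σ^((((p:ℕ)-1)/n + 1) * n)) z = (σ^((0+1) * n)) z := by
      have h1 : (((p:ℕ)-1)/n + 1) * n = n + ((p:ℕ)-1) := by
        rcases hndvd with ⟨e, he⟩
        rw [he, Nat.mul_div_cancel_left e (by omega : 0 < n)]
        ring
      rw [h1, happow n ((p:ℕ)-1) z, hσp1]
      norm_num
    calc (σ^n) x = ∑ j ∈ Finset.range (((p:ℕ)-1)/n), (σ^((j+1+1)*n)) z := by
          rw [hx, map_sum]
          exact Finset.sum_congr rfl (fun j _ => by rw [← happow]; congr 1; ring)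
    _ = ∑ j ∈ Finset.range (((p:ℕ)-1)/n), (σ^((j+1)*n)) z := by
          have h3 := (Finset.sum_range_succ' (fun j => (σ^((j+1)*n)) z) (((p:ℕ)-1)/n)).symm.trans
            (Finset.sum_range_succ (fun j => (σ^((j+1)*n)) z) (((p:ℕ)-1)/n))
          rw [hfe] at h3
          exact add_right_cancel h3
    _ = x := hx.symm
  -- σ^m x ∈ I
  have hgensI : ∀ i, i < n → (σ^i) x ∈ I := fun i hi => hI ▸ Submodule.subset_span ⟨i, hi, rfl⟩
  have hmxI : ∀ m : ℕ, (σ^m) x ∈ I := by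
    intro m
    induction m using Nat.strong_induction_on with
    | _ m ih =>
      by_cases hmn : m < n
      · exact hgensI m hmn
      · have h1 : m = (m - n) + n := by omega
        have h2 : (σ^m) x = (σ^(m-n)) x := by
          conv_lhs => rw [h1]
          rw [happow, hσnx]
        rw [h2]
        exact ih (m-n) (by omega)
  have hIσ : ∀ w ∈ I, ∀ t : ℕ, (σ^t) w ∈ I := by
    intro w hw t
    rw [hI] at hw
    induction hw using Submodule.span_induction with
    | mem y hy =>
      obtain ⟨i, hi, rfl⟩ := hy
      rw [← happow]
      exact hmxI (t+i)
    | zero => rw [map_zero]; exact zero_mem I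
    | add a b _ _ ha hb => rw [map_add]; exact add_mem ha hb
    | smul a y _ hy => rw [map_zsmul]; exact Submodule.smul_mem _ _ hy
  have htr : ∀ w ∈ M, (∑ j ∈ Finset.range (((p:ℕ)-1)/n), (σ^((j+1)*n)) w) ∈ I := by
    intro w hw
    induction hw using Submodule.span_induction with
    | mem y hy =>
      obtain ⟨m, rfl⟩ := hy
      simp only
      have h1 : ∀ j : ℕ, (σ^((j+1)*n)) ((σ^m) z) = (σ^m) ((σ^((j+1)*n)) z) := by
        intro j
        rw [← happow, ← happow, Nat.add_comm]
      rw [Finset.sum_congr rfl (fun j _ => h1 j), ← map_sum, ← hx]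
      exact hmxI m
    | zero => simp only [map_zero, Finset.sum_const_zero]; exact zero_mem I
    | add a b _ _ ha hb => simp only [map_add, Finset.sum_add_distrib]; exact add_mem ha hb
    | smul a y _ hy =>
      simp only [map_zsmul, ← Finset.smul_sum]
      exact Submodule.smul_mem _ _ hy
  have hfixmul : ∀ c : CyclotomicField p ℚ, (σ^n) c = c → ∀ k : ℕ, (σ^(k*n)) c = c := by
    intro c hc k
    induction k with
    | zero => simp
    | succ k ih => rw [show (k+1)*n = n + k*n by ring, happow, ih, hc]
  have hOK : ∀ c : CyclotomicField p ℚ, IsIntegral ℤ c →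
      c ∈ Algebra.adjoin ℤ ({ζ} : Set (CyclotomicField p ℚ)) := by
    intro c hc
    haveI : NeZero (p:ℕ) := ⟨p.ne_zero⟩
    haveI : NeZero ((p:ℕ) : ℚ) := ⟨by exact_mod_cast p.ne_zero⟩
    haveI : IsCyclotomicExtension {(p:ℕ)} ℚ (CyclotomicField p ℚ) :=
      CyclotomicField.isCyclotomicExtension (p:ℕ) ℚ
    letI := IsCyclotomicExtension.Rat.isIntegralClosure_adjoin_singleton_of_prime hζ
    obtain ⟨y, hy⟩ := (this.isIntegral_iff).mp hc
    exact hy ▸ y.2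
  have hxcI : ∀ c : CyclotomicField p ℚ, (σ^n) c = c → IsIntegral ℤ c → x * c ∈ I := by
    intro c hcfix hcint
    have h1 : x * c = ∑ j ∈ Finset.range (((p:ℕ)-1)/n), (σ^((j+1)*n)) (z * c) := by
      rw [hx, Finset.sum_mul]
      exact Finset.sum_congr rfl (fun j _ => by rw [map_mul, hfixmul c hcfix (j+1)])
    rw [h1]
    apply htr
    rw [mul_comm]
    exact hczM c (hOK c hcint)
  have hfixz : ∀ (g : CyclotomicField p ℚ ≃ₐ[ℚ] CyclotomicField p ℚ)
      (y : CyclotomicField p ℚ), g y = y → ∀ k : ℤ, (g^k) y = y := by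
    intro g y hgy k
    have hinv : g⁻¹ y = y := by
      apply g.injective
      calc g (g⁻¹ y) = (g * g⁻¹) y := (AlgEquiv.mul_apply _ _ _).symm
      _ = y := by rw [mul_inv_cancel]; rfl
      _ = g y := hgy.symm
    induction k using Int.induction_on with
    | zero => rw [zpow_zero]; rfl
    | succ k ih => rw [zpow_add_one, AlgEquiv.mul_apply, hgy, ih]
    | pred k ih => rw [zpow_sub_one, AlgEquiv.mul_apply, hinv, ih]
  have hmemK : ∀ y : CyclotomicField p ℚ, (σ^n) y = y → y ∈ K := by
    intro y hy
    rw [hK]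
    rintro ⟨g, hg⟩
    rw [Subgroup.mem_zpowers_iff] at hg
    obtain ⟨k, rfl⟩ := hg
    exact hfixz (σ^n) y hy k
  -- integrality
  have hmapint : ∀ (t : ℕ) (y : CyclotomicField p ℚ), IsIntegral ℤ y →
      IsIntegral ℤ ((σ^t) y) := fun t y hy =>
    hy.map (((σ^t : CyclotomicField p ℚ ≃ₐ[ℚ] CyclotomicField p ℚ)).toAlgHom.restrictScalars ℤ)
  have hζint : IsIntegral ℤ ζ := hζ.isIntegral p.pos
  have hζlam : ∃ t : ℕ, ζ^lam = ζ^t := by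
    refine ⟨(lam % ((p:ℕ):ℤ)).toNat, ?_⟩
    have hp0 : ((p:ℕ):ℤ) ≠ 0 := by exact_mod_cast (by omega : (p:ℕ) ≠ 0)
    conv_lhs => rw [← Int.mul_ediv_add_emod lam ((p:ℕ):ℤ)]
    rw [zpow_add₀ hζ0, zpow_mul, zpow_natCast, hζp, one_zpow, one_mul,
      ← zpow_natCast ζ (lam % ((p:ℕ):ℤ)).toNat, Int.toNat_of_nonneg (Int.emod_nonneg lam hp0)]
  have hzint : IsIntegral ℤ z := by
    obtain ⟨t, ht⟩ := hζlam
    rw [hz, ht]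
    exact ((hζint.pow t).mul (IsIntegral.prod _ (fun j _ =>
      isIntegral_one.sub (hζint.pow _)))).mul (isIntegral_one.sub hζint)
  have hxint : IsIntegral ℤ x := by
    rw [hx]
    exact IsIntegral.sum _ (fun j _ => hmapint _ _ hzint)
  have hgenKI : ∀ i : ℕ, (σ^i) x ∈ K ∧ IsIntegral ℤ ((σ^i) x) := by
    intro i
    refine ⟨hmemK _ ?_, hmapint i x hxint⟩
    rw [← happow, Nat.add_comm, happow, hσnx]
  constructor
  · intro y hy
    rw [hI] at hy
    induction hy using Submodule.span_induction with
    | mem y hy =>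
      obtain ⟨i, hi, rfl⟩ := hy
      exact hgenKI i
    | zero => exact ⟨zero_mem K, isIntegral_zero⟩
    | add a b _ _ ha hb => exact ⟨add_mem ha.1 hb.1, ha.2.add hb.2⟩
    | smul a y _ hy =>
      refine ⟨zsmul_mem hy.1 a, ?_⟩
      rw [zsmul_eq_mul]
      have hca : IsIntegral ℤ ((a : CyclotomicField p ℚ)) := by
        have := isIntegral_algebraMap (R := ℤ) (A := CyclotomicField p ℚ) (x := a)
        simpa using this
      exact hca.mul hy.2
  · intro y hy c hcK hcint
    have hcfix : (σ^n) c = c := by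
      rw [hK] at hcK
      exact hcK ⟨σ^n, Subgroup.mem_zpowers _⟩
    rw [hI] at hy
    induction hy using Submodule.span_induction with
    | mem y hy =>
      obtain ⟨i, hi, rfl⟩ := hy
      have hc'fix : (σ^n) ((σ^(i*((p:ℕ)-2))) c) = (σ^(i*((p:ℕ)-2))) c := by
        rw [← happow, Nat.add_comm, happow, hcfix]
      have hc'int : IsIntegral ℤ ((σ^(i*((p:ℕ)-2))) c) := hmapint _ _ hcint
      have h1 : (σ^i) ((σ^(i*((p:ℕ)-2))) c) = c := by
        rw [← happow]
        have h3 : (((p:ℕ)-1)/n) * n = (p:ℕ)-1 := by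
          rcases hndvd with ⟨e, he⟩
          rw [he, Nat.mul_div_cancel_left e (by omega : 0 < n), Nat.mul_comm]
        have h2 : i + i*((p:ℕ)-2) = (i * (((p:ℕ)-1)/n)) * n := by
          have h4 : 1 + ((p:ℕ)-2) = (p:ℕ)-1 := by omega
          calc i + i*((p:ℕ)-2) = i * (1 + ((p:ℕ)-2)) := by ring
          _ = i * ((p:ℕ)-1) := by rw [h4]
          _ = i * ((((p:ℕ)-1)/n) * n) := by rw [h3]
          _ = (i * (((p:ℕ)-1)/n)) * n := by ring
        rw [h2]
        exact hfixmul c hcfix _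
      have h3 : (σ^i) (x * ((σ^(i*((p:ℕ)-2))) c)) = (σ^i) x * c := by
        rw [map_mul, h1]
      rw [← h3]
      exact hIσ _ (hxcI _ hc'fix hc'int) i
    | zero => rw [zero_mul]; exact zero_mem I
    | add a b _ _ ha hb => rw [add_mul]; exact add_mem ha hb
    | smul a y _ hy => rw [smul_mul_assoc]; exact Submodule.smul_mem _ _ hy
end

section
/- If p = 2n+1 is prime (so K = Q(ζ_p + ζ_p^{-1})), then σ(x)/x is an algebraic integer; indeed σ(x)/x = -ζ_p^{r-1} · (1-ζ_p^{r(r^n - 1)})/(1-ζ_p^{r^n - 1}), which is a unit in ℤ[ζ_p]. -/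
private lemma prod_zpow_sum {L : Type*} [Field L] (x : L) (hx : x ≠ 0)
    (s : Finset ℕ) (f : ℕ → ℤ) : ∏ i ∈ s, x ^ f i = x ^ (∑ i ∈ s, f i) := by
  classical
  induction s using Finset.induction_on with
  | empty => simp
  | @insert a s h ih => rw [Finset.prod_insert h, Finset.sum_insert h, zpow_add₀ hx, ih]

/-- If `p = 2n+1` is prime (so `K = ℚ(ζ_p + ζ_p⁻¹)`), then
`σ(x)/x = -ζ^{r-1} (1-ζ^{r(r^n-1)})/(1-ζ^{r^n-1})`, which is a unit in `ℤ[ζ_p]`;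
in particular `σ(x)/x` is an algebraic integer. -/
theorem stmt9 (n : ℕ) (hn1 : 1 < n) (hnodd : Odd n) (p : ℕ) (hpn : p = 2 * n + 1)
    (hp : p.Prime)
    (L : Type*) [Field L] [CharZero L]
    (ζ : L) (hζ : IsPrimitiveRoot ζ p)
    (r : ℕ) (hr : orderOf (r : ZMod p) = p - 1)
    (lam : ℤ) (hlam : ((lam * ((r : ℤ) - 1) : ℤ) : ZMod p) = 1)
    (σ : L ≃ₐ[ℚ] L) (hσ : σ ζ = ζ ^ r)
    (z : L)
    (hz : z = ζ ^ lam * (∏ j ∈ Finset.range ((p - 1) / 2), (1 - ζ ^ r ^ j)) * (1 - ζ))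
    (x : L) (hx : x = ∑ j ∈ Finset.range ((p - 1) / n), (σ ^ ((j + 1) * n)) z) :
    σ x / x = -ζ ^ (r - 1) * ((1 - ζ ^ (r * (r ^ n - 1))) / (1 - ζ ^ (r ^ n - 1))) ∧
      σ x / x ∈ Algebra.adjoin ℤ {ζ} ∧
      ∃ w ∈ Algebra.adjoin ℤ {ζ}, (σ x / x) * w = 1 := by
  haveI : Fact p.Prime := ⟨hp⟩
  have hn0 : 0 < n := by omega
  have hp0 : p ≠ 0 := by omega
  have hpsub : p - 1 = 2 * n := by omega
  have hζ0 : ζ ≠ 0 := hζ.ne_zero hp0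
  have hζp : ζ ^ p = 1 := hζ.pow_eq_one
  -- facts about R = r mod p
  have hR2n : (r : ZMod p) ^ (2 * n) = 1 := by
    have := pow_orderOf_eq_one (r : ZMod p)
    rwa [hr, hpsub] at this
  have hRne : (r : ZMod p) ≠ 0 := by
    intro h
    rw [h, zero_pow (by omega)] at hR2n
    exact one_ne_zero hR2n.symm
  have hRn : (r : ZMod p) ^ n = -1 := by
    have h2 : (r : ZMod p) ^ n * (r : ZMod p) ^ n = 1 := by
      rw [← pow_add]
      convert hR2n using 2
      ring
    rcases mul_self_eq_one_iff.mp h2 with h | h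
    · exfalso
      have hdvd := orderOf_dvd_of_pow_eq_one h
      rw [hr, hpsub] at hdvd
      have := Nat.le_of_dvd hn0 hdvd
      omega
    · exact h
  -- exponent congruence machinery
  have hzeq : ∀ i j : ℤ, ((i : ZMod p) = (j : ZMod p)) → ζ ^ i = ζ ^ j := by
    intro i j hij
    have hdvd : (p : ℤ) ∣ (i - j) := by
      rw [← ZMod.intCast_zmod_eq_zero_iff_dvd]
      push_cast
      rw [sub_eq_zero]
      exact hij
    have h1 : ζ ^ (i - j) = 1 := (hζ.zpow_eq_one_iff_dvd _).mpr hdvd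
    have h2 : j + (i - j) = i := by ring
    rw [← h2, zpow_add₀ hζ0, h1, mul_one]
  have hzne : ∀ i : ℤ, ((i : ZMod p) ≠ 0) → ζ ^ i ≠ 1 := by
    intro i hi h
    exact hi ((ZMod.intCast_zmod_eq_zero_iff_dvd i p).mpr ((hζ.zpow_eq_one_iff_dvd i).mp h))
  -- σ action on powers of ζ
  have hA : ∀ i : ℤ, σ (ζ ^ i) = ζ ^ ((r : ℤ) * i) := by
    intro i
    rw [map_zpow₀, hσ, ← zpow_natCast ζ r, ← zpow_mul]
  have hAk : ∀ (k : ℕ) (i : ℤ), (σ ^ k) (ζ ^ i) = ζ ^ ((r : ℤ) ^ k * i) := by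
    intro k
    induction k with
    | zero => intro i; simp
    | succ k ih =>
      intro i
      rw [pow_succ, AlgEquiv.mul_apply, hA, ih,
        show (r : ℤ) ^ k * ((r : ℤ) * i) = (r : ℤ) ^ (k + 1) * i by ring]
  -- z in zpow form
  set α : L := ∏ j ∈ Finset.range n, (1 - ζ ^ ((r : ℤ) ^ j)) with hαdef
  have hz' : z = ζ ^ lam * α * (1 - ζ) := by
    rw [hz, show (p - 1) / 2 = n by omega]
    congr 2
    apply Finset.prod_congr rfl
    intro j _
    rw [← zpow_natCast ζ (r ^ j), Nat.cast_pow]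
  have hfac : ∀ j : ℕ, (1 : L) - ζ ^ ((r : ℤ) ^ j) ≠ 0 := by
    intro j
    rw [sub_ne_zero]
    intro h
    refine hzne ((r : ℤ) ^ j) ?_ h.symm
    push_cast
    exact pow_ne_zero j hRne
  have hα0 : α ≠ 0 := Finset.prod_ne_zero_iff.mpr fun j _ => hfac j
  have h1ζ : (1 : L) - ζ ≠ 0 := by
    have := hfac 0
    simpa using this
  have hkey : (1 : L) - ζ ^ (-1 : ℤ) = -(ζ ^ (-1 : ℤ)) * (1 - ζ) := by
    rw [zpow_neg, zpow_one]
    field_simp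
    ring
  -- σ α
  have hαshift : σ α = -(ζ ^ (-1 : ℤ)) * α := by
    have hσα : σ α = ∏ j ∈ Finset.range n, (1 - ζ ^ ((r : ℤ) ^ (j + 1))) := by
      rw [hαdef, map_prod]
      apply Finset.prod_congr rfl
      intro j _
      rw [map_sub, map_one, hA, show (r : ℤ) * (r : ℤ) ^ j = (r : ℤ) ^ (j + 1) by ring]
    have hP1 : σ α * (1 - ζ) = α * (1 - ζ ^ ((r : ℤ) ^ n)) := by
      rw [hσα, show (1 : L) - ζ = 1 - ζ ^ ((r : ℤ) ^ 0) by norm_num,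
        ← Finset.prod_range_succ' (fun j => 1 - ζ ^ ((r : ℤ) ^ j)) n,
        Finset.prod_range_succ]
    have hζn1 : ζ ^ ((r : ℤ) ^ n) = ζ ^ (-1 : ℤ) := by
      apply hzeq
      push_cast
      rw [hRn]
    rw [hζn1, hkey] at hP1
    apply mul_right_cancel₀ h1ζ
    rw [hP1]
    ring
  -- the sum S
  have hS : ζ ^ (-(∑ j ∈ Finset.range n, (r : ℤ) ^ j)) = ζ ^ (2 * lam) := by
    apply hzeq
    have hgeom := geom_sum_mul (r : ZMod p) n
    have hlam' : ((lam : ZMod p)) * ((r : ZMod p) - 1) = 1 := by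
      push_cast at hlam
      convert hlam using 2 <;> push_cast <;> ring
    push_cast
    rw [hRn] at hgeom
    have : (∑ j ∈ Finset.range n, (r : ZMod p) ^ j) = -2 * (lam : ZMod p) := by
      calc (∑ j ∈ Finset.range n, (r : ZMod p) ^ j)
          = (∑ j ∈ Finset.range n, (r : ZMod p) ^ j) * ((lam : ZMod p) * ((r : ZMod p) - 1)) := by
            rw [hlam', mul_one]
        _ = (lam : ZMod p) * ((∑ j ∈ Finset.range n, (r : ZMod p) ^ j) * ((r : ZMod p) - 1)) := by
            ring
        _ = -2 * (lam : ZMod p) := by rw [hgeom]; ring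
    rw [this]
    ring
  -- P(n)
  have hPn : (∏ j ∈ Finset.range n, (1 - ζ ^ ((r : ℤ) ^ n * (r : ℤ) ^ j)))
      = -(ζ ^ (2 * lam)) * α := by
    have step : ∀ j ∈ Finset.range n, (1 : L) - ζ ^ ((r : ℤ) ^ n * (r : ℤ) ^ j)
        = (-1) * (ζ ^ (-(r : ℤ) ^ j)) * (1 - ζ ^ ((r : ℤ) ^ j)) := by
      intro j _
      have h1 : ζ ^ ((r : ℤ) ^ n * (r : ℤ) ^ j) = ζ ^ (-(r : ℤ) ^ j) := by
        apply hzeq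
        push_cast
        rw [hRn]
        ring
      rw [h1, zpow_neg]
      have hc : ζ ^ ((r : ℤ) ^ j) ≠ 0 := zpow_ne_zero _ hζ0
      field_simp
      ring
    rw [Finset.prod_congr rfl step, Finset.prod_mul_distrib, Finset.prod_mul_distrib,
      Finset.prod_const, Finset.card_range, hnodd.neg_one_pow,
      prod_zpow_sum ζ hζ0]
    rw [show (∑ i ∈ Finset.range n, -(r : ℤ) ^ i) = -(∑ i ∈ Finset.range n, (r : ℤ) ^ i) by
      rw [← Finset.sum_neg_distrib], hS, ← hαdef]
    ring
  -- images of z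
  have hzk : ∀ k : ℕ, (σ ^ k) z = ζ ^ ((r : ℤ) ^ k * lam)
      * (∏ j ∈ Finset.range n, (1 - ζ ^ ((r : ℤ) ^ k * (r : ℤ) ^ j)))
      * (1 - ζ ^ ((r : ℤ) ^ k * 1)) := by
    have hAk1 : ∀ k : ℕ, (σ ^ k) ζ = ζ ^ ((r : ℤ) ^ k * 1) := by
      intro k
      have h := hAk k 1
      rwa [zpow_one] at h
    intro k
    rw [hz', map_mul, map_mul, hAk, map_sub, map_one, hAk1, map_prod]
    congr 2
    apply Finset.prod_congr rfl
    intro j _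
    rw [map_sub, map_one, hAk]
  have hz2n : (σ ^ (2 * n)) z = z := by
    rw [hzk, hz']
    have e1 : ζ ^ ((r : ℤ) ^ (2 * n) * lam) = ζ ^ lam := by
      apply hzeq; push_cast; rw [hR2n]; ring
    have e2 : (∏ j ∈ Finset.range n, (1 - ζ ^ ((r : ℤ) ^ (2 * n) * (r : ℤ) ^ j))) = α := by
      apply Finset.prod_congr rfl
      intro j _
      congr 1
      apply hzeq; push_cast; rw [hR2n]; ring
    have e3 : ζ ^ ((r : ℤ) ^ (2 * n) * 1) = ζ := by
      have h := hzeq ((r : ℤ) ^ (2 * n) * 1) 1 (by push_cast; rw [hR2n]; ring)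
      rwa [zpow_one] at h
    rw [e1, e2, e3]
  have hzn : (σ ^ n) z = ζ ^ (lam - 1) * α * (1 - ζ) := by
    rw [hzk, hPn]
    have e1 : ζ ^ ((r : ℤ) ^ n * lam) = ζ ^ (-lam) := by
      apply hzeq; push_cast; rw [hRn]; ring
    have e3 : ζ ^ ((r : ℤ) ^ n * 1) = ζ ^ (-1 : ℤ) := by
      apply hzeq; push_cast; rw [hRn]; ring
    rw [e1, e3, hkey]
    have hcomb : ζ ^ (-lam) * (ζ ^ (2 * lam) * ζ ^ (-1 : ℤ)) = ζ ^ (lam - 1) := by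
      rw [← zpow_add₀ hζ0, ← zpow_add₀ hζ0]
      congr 1
      ring
    linear_combination (α * (1 - ζ)) * hcomb
  -- explicit form of x
  have hll : ζ ^ lam = ζ ^ (lam - 1) * ζ := by
    have h := zpow_add₀ hζ0 (lam - 1) 1
    rw [sub_add_cancel, zpow_one] at h
    exact h
  have hxval : x = ζ ^ (lam - 1) * α * (1 - ζ ^ (2 : ℕ)) := by
    have hdiv2 : (p - 1) / n = 2 := by
      rw [hpsub]
      exact Nat.mul_div_cancel 2 hn0
    rw [hx, hdiv2, Finset.sum_range_succ, Finset.sum_range_succ, Finset.sum_range_zero,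
      zero_add, show (0 + 1) * n = n by ring, show (1 + 1) * n = 2 * n by ring, hzn, hz2n, hz']
    linear_combination (α * (1 - ζ)) * hll
  have hσ2 : σ ((ζ : L) ^ (2 : ℕ)) = ζ ^ (2 * (r : ℤ)) := by
    rw [← zpow_natCast ζ 2, show ((2 : ℕ) : ℤ) = (2 : ℤ) from rfl, hA]
    congr 1
    ring
  have hσx : σ x = ζ ^ ((r : ℤ) * (lam - 1)) * (-(ζ ^ (-1 : ℤ)) * α) * (1 - ζ ^ (2 * (r : ℤ))) := by
    rw [hxval, map_mul, map_mul, map_sub, map_one, hA, hαshift, hσ2]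
  -- nonvanishing
  have hp2 : ((2 : ℤ) : ZMod p) ≠ 0 := by
    intro h
    rw [ZMod.intCast_zmod_eq_zero_iff_dvd] at h
    have := Int.le_of_dvd (by norm_num) h
    omega
  have h2a : (1 : L) - ζ ^ (2 : ℕ) ≠ 0 := by
    rw [sub_ne_zero, ← zpow_natCast ζ 2, show ((2 : ℕ) : ℤ) = (2 : ℤ) from rfl]
    exact fun h => hzne 2 hp2 h.symm
  have hm2 : (1 : L) - ζ ^ (-2 : ℤ) ≠ 0 := by
    rw [sub_ne_zero]
    refine fun h => hzne (-2) ?_ h.symm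
    push_cast
    simpa using hp2
  have hx0 : x ≠ 0 := by
    rw [hxval]
    exact mul_ne_zero (mul_ne_zero (zpow_ne_zero _ hζ0) hα0) h2a
  -- rewriting of the ℕ-power exponents in the goal
  have hr2 : 2 ≤ r := by
    rcases Nat.lt_or_ge r 2 with h | h
    · interval_cases r
      · simp at hRne
      · rw [Nat.cast_one, orderOf_one] at hr; omega
    · exact h
  have hrn1 : 1 ≤ r ^ n := Nat.one_le_pow _ _ (by omega)
  have hb1 : (ζ : L) ^ (r - 1) = ζ ^ ((r : ℤ) - 1) := by
    rw [← zpow_natCast ζ (r - 1)]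
    congr 1
    push_cast [Nat.cast_sub (by omega : 1 ≤ r)]
    ring
  have hb2 : (ζ : L) ^ (r ^ n - 1) = ζ ^ (-2 : ℤ) := by
    rw [← zpow_natCast ζ (r ^ n - 1)]
    apply hzeq
    push_cast [Nat.cast_sub hrn1]
    rw [hRn]
    ring
  have hb3 : (ζ : L) ^ (r * (r ^ n - 1)) = ζ ^ (-(2 * (r : ℤ))) := by
    rw [← zpow_natCast ζ (r * (r ^ n - 1))]
    apply hzeq
    push_cast [Nat.cast_sub hrn1]
    rw [hRn]
    ring
  -- key zpow identities for the final computation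
  have g1 : ζ ^ ((r : ℤ) * (lam - 1)) * ζ ^ (-1 : ℤ)
      = ζ ^ ((r : ℤ) - 1) * ζ ^ (lam - 1) * ζ ^ (-(2 * (r : ℤ))) * ζ ^ (2 : ℕ) := by
    rw [← zpow_natCast ζ 2, ← zpow_add₀ hζ0, ← zpow_add₀ hζ0, ← zpow_add₀ hζ0,
      ← zpow_add₀ hζ0]
    apply hzeq
    push_cast
    have hlam' : ((lam : ZMod p)) * ((r : ZMod p) - 1) = 1 := by
      push_cast at hlam
      convert hlam using 2 <;> push_cast <;> ring
    linear_combination hlam'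
  have g4 : ζ ^ (2 * (r : ℤ)) * ζ ^ (-(2 * (r : ℤ))) = 1 := by
    rw [← zpow_add₀ hζ0]
    simp
  have g5 : ζ ^ (-2 : ℤ) * ζ ^ (2 : ℕ) = 1 := by
    rw [← zpow_natCast ζ 2, ← zpow_add₀ hζ0]
    norm_num
  -- main identity
  have hmain : σ x / x
      = -ζ ^ (r - 1) * ((1 - ζ ^ (r * (r ^ n - 1))) / (1 - ζ ^ (r ^ n - 1))) := by
    have hd0 : ζ ^ (lam - 1) * α * (1 - ζ ^ (2 : ℕ)) ≠ 0 :=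
      mul_ne_zero (mul_ne_zero (zpow_ne_zero _ hζ0) hα0) h2a
    rw [hσx, hb1, hb2, hb3, hxval, ← mul_div_assoc, div_eq_div_iff hd0 hm2]
    linear_combination (-α * (1 - ζ ^ (2 * (r : ℤ))) * (1 - ζ ^ (-2 : ℤ))) * g1
      + (-α * ζ ^ ((r : ℤ) - 1) * ζ ^ (lam - 1) * (ζ ^ (-2 : ℤ) * ζ ^ (2 : ℕ) - ζ ^ (2 : ℕ))) * g4
      + (-α * ζ ^ ((r : ℤ) - 1) * ζ ^ (lam - 1) * (1 - ζ ^ (-(2 * (r : ℤ))))) * g5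
  -- common ingredients for the last two parts
  have hξne : (1 : L) - ζ ^ (r ^ n - 1) ≠ 0 := by rw [hb2]; exact hm2
  have hneq : ∀ i j : ℕ, ((i : ZMod p) = (j : ZMod p)) → ζ ^ i = ζ ^ j := by
    intro i j h
    rw [← zpow_natCast ζ i, ← zpow_natCast ζ j]
    apply hzeq
    push_cast
    exact_mod_cast h
  have hdivsum : (1 - ζ ^ (r * (r ^ n - 1))) / (1 - ζ ^ (r ^ n - 1))
      = ∑ i ∈ Finset.range r, (ζ ^ (r ^ n - 1)) ^ i := by
    rw [div_eq_iff hξne]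
    have hg := geom_sum_mul (ζ ^ (r ^ n - 1)) r
    have hpow : (ζ ^ (r ^ n - 1)) ^ r = ζ ^ (r * (r ^ n - 1)) := by
      rw [← pow_mul, mul_comm]
    linear_combination hg + hpow
  have hself := Algebra.self_mem_adjoin_singleton ℤ ζ
  refine ⟨hmain, ?_, ?_⟩
  · rw [hmain, hdivsum]
    exact Subalgebra.mul_mem _
      (Subalgebra.neg_mem _ (Subalgebra.pow_mem _ hself _))
      (Subalgebra.sum_mem _ fun i _ =>
        Subalgebra.pow_mem _ (Subalgebra.pow_mem _ hself _) _)
  · -- the inverse unit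
    have hfold : (r : ZMod p) * (r : ZMod p) ^ (2 * n - 1) = 1 := by
      rw [← pow_succ', show 2 * n - 1 + 1 = 2 * n by omega, hR2n]
    have hηs : (ζ ^ (r * (r ^ n - 1))) ^ (r ^ (2 * n - 1)) = ζ ^ (r ^ n - 1) := by
      rw [← pow_mul]
      apply hneq
      push_cast [Nat.cast_sub hrn1]
      linear_combination ((r : ZMod p) ^ n - 1) * hfold
    have hT := geom_sum_mul (ζ ^ (r * (r ^ n - 1))) (r ^ (2 * n - 1))
    have hT' : (∑ i ∈ Finset.range (r ^ (2 * n - 1)), (ζ ^ (r * (r ^ n - 1))) ^ i)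
        * (1 - ζ ^ (r * (r ^ n - 1))) = 1 - ζ ^ (r ^ n - 1) := by
      linear_combination -hT - hηs
    have hPf : (ζ : L) ^ (r - 1) * ζ ^ ((r - 1) * (p - 1)) = 1 := by
      rw [← pow_add,
        show (r - 1) + (r - 1) * (p - 1) = (r - 1) * p from by
          obtain ⟨m, rfl⟩ : ∃ m, p = m + 1 := ⟨p - 1, by omega⟩
          simp [Nat.add_sub_cancel]
          ring,
        mul_comm, pow_mul, hζp, one_pow]
    refine ⟨-ζ ^ ((r - 1) * (p - 1))
        * ∑ i ∈ Finset.range (r ^ (2 * n - 1)), (ζ ^ (r * (r ^ n - 1))) ^ i, ?_, ?_⟩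
    · exact Subalgebra.mul_mem _
        (Subalgebra.neg_mem _ (Subalgebra.pow_mem _ hself _))
        (Subalgebra.sum_mem _ fun i _ =>
          Subalgebra.pow_mem _ (Subalgebra.pow_mem _ hself _) _)
    · rw [hmain]
      field_simp [hξne]
      linear_combination ((∑ i ∈ Finset.range (r ^ (2 * n - 1)), (ζ ^ (r * (r ^ n - 1))) ^ i)
        * (1 - ζ ^ (r * (r ^ n - 1)))) * hPf + hT'
end

section
/- Let m ≥ 3, ω = e^{2πi/2^m}, θ_j = ω^j + ω^{-j}, k = 2^{m-2}, and L = Q(θ_1). The set {w_0, w_1, ..., w_{k-1}} with w_0 = 1 and w_i = 1 + θ_1 + ... + θ_i is a ℤ-basis of the ring of integers O_L = ℤ[θ_1]. -/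
open Polynomial Finset

private lemma dick_aux (n : ℕ) :
    (Polynomial.dickson 1 (1:ℚ) (n+1)).Monic ∧
      (Polynomial.dickson 1 (1:ℚ) (n+1)).natDegree = n + 1 := by
  induction n using Nat.twoStepInduction with
  | zero => simp [Polynomial.dickson_one, Polynomial.monic_X]
  | one =>
      have h2 : Polynomial.dickson 1 (1:ℚ) 2 = X ^ 2 - Polynomial.C 2 := by
        rw [Polynomial.dickson_two, Polynomial.C_1, one_mul]
        norm_num
        exact (map_ofNat Polynomial.C 2).symm
      constructor
      · rw [h2]; exact Polynomial.monic_X_pow_sub_C 2 (by norm_num)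
      · rw [h2]; compute_degree!
  | more n ih1 ih2 =>
      have hrec := Polynomial.dickson_add_two 1 (1:ℚ) (n+1)
      have hm : (X * Polynomial.dickson 1 (1:ℚ) (n+1+1)).Monic :=
        Polynomial.monic_X.mul ih2.1
      have hdm : (X * Polynomial.dickson 1 (1:ℚ) (n+1+1)).natDegree = n + 3 := by
        rw [Polynomial.natDegree_mul Polynomial.X_ne_zero ih2.1.ne_zero,
          Polynomial.natDegree_X, ih2.2]; omega
      have hC : (Polynomial.C (1:ℚ) * Polynomial.dickson 1 (1:ℚ) (n+1)).natDegree = n + 1 := by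
        simp [ih1.2]
      have hlt : (Polynomial.C (1:ℚ) * Polynomial.dickson 1 (1:ℚ) (n+1)).degree
          < (X * Polynomial.dickson 1 (1:ℚ) (n+1+1)).degree := by
        apply Polynomial.degree_lt_degree
        rw [hC, hdm]; omega
      constructor
      · rw [show n+1+2 = n+2+1 by ring] at hrec ⊢
        rw [hrec]
        exact hm.sub_of_left hlt
      · rw [show n+1+2 = n+2+1 by ring] at hrec ⊢
        rw [hrec, Polynomial.natDegree_sub_eq_left_of_natDegree_lt (by rw [hC, hdm]; omega), hdm]



private lemma dick_deg_le (t : ℕ) : (Polynomial.dickson 1 (1:ℚ) t).natDegree ≤ t := by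
  cases t with
  | zero => norm_num [Polynomial.dickson_zero]
  | succ n => exact le_of_eq (dick_aux n).2

private lemma aux_eval {ω : ℂ} (hω0 : ω ≠ 0) (n : ℕ) :
    Polynomial.aeval (ω + ω⁻¹) (Polynomial.dickson 1 (1:ℚ) n) = ω ^ n + (ω ^ n)⁻¹ := by
  have h := Polynomial.dickson_one_one_eval_add_inv ω ω⁻¹ (mul_inv_cancel₀ hω0) n
  rw [Polynomial.aeval_def, ← Polynomial.eval_map, Polynomial.map_dickson]
  simpa [inv_pow] using h

private lemma aux_L1 (m' : ℕ) {ω : ℂ} (hω : IsPrimitiveRoot ω (2 ^ (m' + 3))) :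
    2 ^ (m' + 1) ≤ (minpoly ℚ (ω + ω⁻¹)).natDegree := by
  have hω0 : ω ≠ 0 := hω.ne_zero (by positivity)
  have hωint : IsIntegral ℚ ω := by
    refine ⟨X ^ (2 ^ (m' + 3)) - Polynomial.C 1, Polynomial.monic_X_pow_sub_C 1 (by positivity), ?_⟩
    simp [hω.pow_eq_one]
  have hinv : ω⁻¹ = ω ^ (2 ^ (m' + 3) - 1) := by
    refine inv_eq_of_mul_eq_one_right ?_
    rw [← pow_succ', show 2 ^ (m' + 3) - 1 + 1 = 2 ^ (m' + 3) from by
        have : 0 < 2 ^ (m'+3) := by positivity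
        omega, hω.pow_eq_one]
  have hθint : IsIntegral ℚ (ω + ω⁻¹) := hωint.add (hinv ▸ hωint.pow _)
  by_contra hlt
  push_neg at hlt
  set θ := ω + ω⁻¹ with hθ
  set M := minpoly ℚ θ with hMdef
  set d := M.natDegree with hd
  have hMmonic : M.Monic := minpoly.monic hθint
  have hM0 : Polynomial.aeval θ M = 0 := minpoly.aeval ℚ θ
  set Q : ℚ[X] := ∑ j ∈ Finset.range (d + 1),
      Polynomial.C (M.coeff j) * (X ^ (d - j) * ((X : ℚ[X]) ^ 2 + 1) ^ j) with hQ
  have hB : ((X : ℚ[X]) ^ 2 + 1).Monic := by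
    simpa using Polynomial.monic_X_pow_add_C (R := ℚ) (1 : ℚ) (n := 2) (by norm_num)
  have hBdeg : ((X : ℚ[X]) ^ 2 + 1).natDegree = 2 := by
    simpa using Polynomial.natDegree_X_pow_add_C (R := ℚ) (r := (1:ℚ)) (n := 2)
  have hterm_deg : ∀ j ∈ Finset.range (d + 1),
      (Polynomial.C (M.coeff j) * (X ^ (d - j) * ((X : ℚ[X]) ^ 2 + 1) ^ j)).natDegree ≤ d + j := by
    intro j hj
    have hj' : j ≤ d := Nat.lt_succ_iff.mp (Finset.mem_range.mp hj)
    refine le_trans (Polynomial.natDegree_mul_le) ?_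
    have h2 : (X ^ (d - j) * ((X : ℚ[X]) ^ 2 + 1) ^ j).natDegree ≤ (d - j) + 2 * j := by
      refine le_trans (Polynomial.natDegree_mul_le) ?_
      have := Polynomial.natDegree_pow_le (p := (X : ℚ[X]) ^ 2 + 1) (n := j)
      rw [hBdeg] at this
      simp only [Polynomial.natDegree_X_pow]
      omega
    simp only [Polynomial.natDegree_C]
    omega
  have hQω : Polynomial.aeval ω Q = 0 := by
    have hterm : ∀ j ∈ Finset.range (d + 1),
        Polynomial.aeval ω (Polynomial.C (M.coeff j) * (X ^ (d - j) * ((X : ℚ[X]) ^ 2 + 1) ^ j))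
          = ω ^ d * (algebraMap ℚ ℂ (M.coeff j) * θ ^ j) := by
      intro j hj
      have hj' : j ≤ d := Nat.lt_succ_iff.mp (Finset.mem_range.mp hj)
      have h1 : (ω ^ 2 + 1) = ω * θ := by
        rw [hθ]; field_simp
      simp only [map_mul, map_pow, map_add, map_one, Polynomial.aeval_C, Polynomial.aeval_X]
      rw [h1, mul_pow]
      rw [show ω ^ (d - j) * (ω ^ j * θ ^ j) = (ω ^ (d - j) * ω ^ j) * θ ^ j by ring,
        pow_sub_mul_pow ω hj']
      ring
    rw [hQ, map_sum, Finset.sum_congr rfl hterm, ← Finset.mul_sum]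
    have hsum : ∑ j ∈ Finset.range (d + 1), algebraMap ℚ ℂ (M.coeff j) * θ ^ j
        = Polynomial.aeval θ M := by
      rw [Polynomial.aeval_eq_sum_range]
      exact Finset.sum_congr rfl fun j _ => by rw [Algebra.smul_def]
    rw [hsum, hM0, mul_zero]
  have hQc : Q.coeff (2 * d) = 1 := by
    rw [hQ, Polynomial.finset_sum_coeff]
    rw [Finset.sum_eq_single d]
    · have hmon : (((X : ℚ[X]) ^ 2 + 1) ^ d).Monic := hB.pow d
      have hdeg : (((X : ℚ[X]) ^ 2 + 1) ^ d).natDegree = 2 * d := by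
        rw [hB.natDegree_pow, hBdeg]; ring
      rw [Nat.sub_self, pow_zero, one_mul, Polynomial.coeff_C_mul, ← hdeg,
        hmon.coeff_natDegree]
      have : M.coeff d = 1 := hMmonic.coeff_natDegree
      rw [this, mul_one]
    · intro j hj hne
      have hj' : j ≤ d := Nat.lt_succ_iff.mp (Finset.mem_range.mp hj)
      refine Polynomial.coeff_eq_zero_of_natDegree_lt (lt_of_le_of_lt (hterm_deg j hj) ?_)
      omega
    · intro h
      exact absurd (Finset.mem_range.mpr (Nat.lt_succ_self d)) h
  have hQne : Q ≠ 0 := fun h => by simp [h] at hQc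
  have hdvd : minpoly ℚ ω ∣ Q := minpoly.dvd ℚ ω hQω
  have h1 : (minpoly ℚ ω).natDegree ≤ Q.natDegree := Polynomial.natDegree_le_of_dvd hdvd hQne
  have h2 : Q.natDegree ≤ 2 * d :=
    Polynomial.natDegree_sum_le_of_forall_le _ _ fun j hj =>
      le_trans (hterm_deg j hj) (by
        have := Nat.lt_succ_iff.mp (Finset.mem_range.mp hj); omega)
  have h3 : (minpoly ℚ ω).natDegree = 2 ^ (m' + 2) := by
    rw [← Polynomial.cyclotomic_eq_minpoly_rat hω (by positivity), Polynomial.natDegree_cyclotomic,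
      Nat.totient_prime_pow Nat.prime_two (by omega)]
    simp [pow_succ]
  have h4 : (2:ℕ) ^ (m' + 2) = 2 * 2 ^ (m' + 1) := by ring
  omega




/-- Let `m ≥ 3`, `ω` a primitive `2^m`-th root of unity, `θ_j = ω^j + ω^{-j}`,
`k = 2^{m-2}` and `L = ℚ(θ_1)`. The family `w_i = 1 + θ_1 + ⋯ + θ_i`, `0 ≤ i ≤ k-1`,
is a ℤ-basis of the ring of integers `O_L = ℤ[θ_1]`. -/
theorem stmt12 (m : ℕ) (hm : 3 ≤ m) (ω : ℂ) (hω : IsPrimitiveRoot ω (2 ^ m))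
    (w : Fin (2 ^ (m - 2)) → ℂ)
    (hw : ∀ i, w i = 1 + ∑ t ∈ Finset.Icc 1 (i : ℕ), (ω ^ t + (ω ^ t)⁻¹)) :
    LinearIndependent ℤ w ∧
      Submodule.span ℤ (Set.range w) =
        Subalgebra.toSubmodule (Algebra.adjoin ℤ {ω + ω⁻¹}) := by
  obtain ⟨m', rfl⟩ : ∃ m', m = m' + 3 := ⟨m - 3, by omega⟩
  have hω0 : ω ≠ 0 := hω.ne_zero (by positivity)
  set θ : ℂ := ω + ω⁻¹ with hθdef
  set c : ℕ → ℂ := fun t => ω ^ t + (ω ^ t)⁻¹ with hc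
  have hcdef : ∀ t, c t = ω ^ t + (ω ^ t)⁻¹ := fun t => rfl
  have hw' : ∀ i, w i = 1 + ∑ t ∈ Finset.Icc 1 (i : ℕ), c t := hw
  have hc0 : c 0 = 2 := by rw [hcdef]; norm_num
  have hc1 : c 1 = θ := by rw [hcdef, pow_one, hθdef]
  have hrec : ∀ n, c (n + 2) = θ * c (n + 1) - c n := by
    intro n
    rw [hcdef, hcdef, hcdef, hθdef]
    field_simp
    ring
  have hω2 : ω ^ (2 ^ (m' + 2)) = -1 := by
    have h1 : (ω ^ 2 ^ (m' + 2)) ^ 2 = 1 := by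
      rw [← pow_mul, show 2 ^ (m' + 2) * 2 = 2 ^ (m' + 3) by ring, hω.pow_eq_one]
    have h2 : ω ^ 2 ^ (m' + 2) ≠ 1 :=
      hω.pow_ne_one_of_pos_of_lt (by positivity)
        (Nat.pow_lt_pow_right (by norm_num) (by omega))
    have h3 : (ω ^ 2 ^ (m' + 2) - 1) * (ω ^ 2 ^ (m' + 2) + 1) = 0 := by
      linear_combination h1
    rcases mul_eq_zero.mp h3 with h | h
    · exact absurd (sub_eq_zero.mp h) h2
    · exact eq_neg_of_add_eq_zero_left h
  have hneg : ∀ n, c (n + 2 ^ (m' + 2)) = -c n := by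
    intro n
    rw [hcdef, hcdef, pow_add, hω2]
    rw [show ω ^ n * (-1 : ℂ) = -(ω ^ n) by ring, inv_neg]
    ring
  have hflip : ∀ n ≤ 2 ^ (m' + 2), c (2 ^ (m' + 2) - n) = -c n := by
    intro n hn
    have hωn : ω ^ n ≠ 0 := pow_ne_zero _ hω0
    have hx : ω ^ (2 ^ (m' + 2) - n) = -(ω ^ n)⁻¹ := by
      have h := pow_sub_mul_pow ω hn
      rw [hω2] at h
      field_simp at h ⊢
      linear_combination h
    rw [hcdef, hcdef, hx, inv_neg, inv_inv]
    ring
  -- membership of powers & c's in the adjoin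
  have hθA : θ ∈ Algebra.adjoin ℤ {θ} := Algebra.self_mem_adjoin_singleton ℤ θ
  have hcA : ∀ n, c n ∈ Algebra.adjoin ℤ {θ} := by
    intro n
    induction n using Nat.twoStepInduction with
    | zero =>
        rw [hc0, show (2 : ℂ) = 1 + 1 by norm_num]
        exact add_mem (one_mem _) (one_mem _)
    | one => rw [hc1]; exact hθA
    | more n ih1 ih2 => rw [hrec]; exact sub_mem (mul_mem hθA ih2) ih1
  -- span of w facts
  have hk0 : (0 : ℕ) < 2 ^ (m' + 3 - 2) := by positivity
  have hw0 : w ⟨0, hk0⟩ = 1 := by rw [hw']; simp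
  have hstep : ∀ (s : ℕ) (h1 : s + 1 < 2 ^ (m' + 3 - 2)),
      w ⟨s + 1, h1⟩ - w ⟨s, by omega⟩ = c (s + 1) := by
    intro s h1
    rw [hw', hw']
    show 1 + ∑ t ∈ Finset.Icc 1 (s + 1), c t - (1 + ∑ t ∈ Finset.Icc 1 s, c t) = c (s + 1)
    rw [Finset.sum_Icc_succ_top (by omega : 1 ≤ s + 1)]
    ring
  have hcT : ∀ n, c n ∈ Submodule.span ℤ (Set.range w) := by
    intro n
    induction n using Nat.strong_induction_on with
    | _ n ih =>
      have hp2 : (2:ℕ) ^ (m' + 2) = 2 * 2 ^ (m' + 1) := by ring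
      have hp1 : (0:ℕ) < 2 ^ (m' + 1) := by positivity
      have hp0 : (0:ℕ) < 2 ^ m' := by positivity
      have hp3 : (2:ℕ) ^ (m' + 2) = 4 * 2 ^ m' := by ring
      have hp4 : (2:ℕ) ^ (m' + 1) = 2 * 2 ^ m' := by ring
      rcases lt_or_ge n (2 ^ (m' + 1)) with h | h
      · rcases n with _ | s
        · have h2 : c 0 = (2 : ℤ) • w ⟨0, hk0⟩ := by rw [hw0, hc0]; norm_num
          rw [h2]
          exact Submodule.smul_mem _ _ (Submodule.subset_span ⟨_, rfl⟩)
        · rw [← hstep s (by exact h)]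
          exact sub_mem (Submodule.subset_span ⟨_, rfl⟩) (Submodule.subset_span ⟨_, rfl⟩)
      · rcases lt_or_ge n (2 ^ (m' + 2)) with h2 | h2
        · rcases eq_or_lt_of_le h with heq | hlt
          · have h0 := hflip n (by omega)
            rw [show 2 ^ (m' + 2) - n = n by omega] at h0
            have hz : (2 : ℂ) * c n = 0 := by linear_combination h0
            have : c n = 0 := by
              rcases mul_eq_zero.mp hz with h' | h'
              · norm_num at h'
              · exact h'
            rw [this]; exact Submodule.zero_mem _
          · have hfl := hflip n (le_of_lt h2)
            have hcn : c n = -c (2 ^ (m' + 2) - n) := by rw [hfl, neg_neg]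
            rw [hcn]
            exact neg_mem (ih _ (by omega))
        · have h3 := hneg (n - 2 ^ (m' + 2))
          rw [Nat.sub_add_cancel h2] at h3
          rw [h3]
          exact neg_mem (ih _ (by omega))
  have hmulU : ∀ x ∈ Submodule.span ℤ ({1} ∪ Set.range c : Set ℂ),
      θ * x ∈ Submodule.span ℤ ({1} ∪ Set.range c : Set ℂ) := by
    intro x hx
    induction hx using Submodule.span_induction with
    | mem y hy =>
        simp only [Set.mem_union, Set.mem_singleton_iff, Set.mem_range] at hy
        rcases hy with rfl | ⟨n, rfl⟩
        · rw [mul_one, ← hc1]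
          exact Submodule.subset_span (Or.inr ⟨1, rfl⟩)
        · rcases n with _ | t
          · have : θ * c 0 = (2 : ℤ) • c 1 := by rw [hc0, hc1, zsmul_eq_mul]; push_cast; ring
            rw [this]
            exact Submodule.smul_mem _ _ (Submodule.subset_span (Or.inr ⟨1, rfl⟩))
          · have : θ * c (t + 1) = c (t + 2) + c t := by rw [hrec]; ring
            rw [this]
            exact add_mem (Submodule.subset_span (Or.inr ⟨_, rfl⟩))
              (Submodule.subset_span (Or.inr ⟨_, rfl⟩))
    | zero => rw [mul_zero]; exact Submodule.zero_mem _
    | add y z hy hz ihy ihz => rw [mul_add]; exact add_mem ihy ihz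
    | smul a y hy ihy => rw [mul_smul_comm]; exact Submodule.smul_mem _ _ ihy
  have hpowU : ∀ n, θ ^ n ∈ Submodule.span ℤ ({1} ∪ Set.range c : Set ℂ) := by
    intro n
    induction n with
    | zero => rw [pow_zero]; exact Submodule.subset_span (Or.inl rfl)
    | succ n ih => rw [pow_succ, mul_comm]; exact hmulU _ ih
  have hpowT : ∀ n, θ ^ n ∈ Submodule.span ℤ (Set.range w) := by
    intro n
    refine Submodule.span_le.mpr ?_ (hpowU n)
    rintro y (rfl | ⟨t, rfl⟩)
    · rw [← hw0]; exact Submodule.subset_span ⟨_, rfl⟩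
    · exact hcT t
  have hspan : Submodule.span ℤ (Set.range w) =
      Subalgebra.toSubmodule (Algebra.adjoin ℤ {θ}) := by
    apply le_antisymm
    · rw [Submodule.span_le]
      rintro x ⟨i, rfl⟩
      show w i ∈ Algebra.adjoin ℤ {θ}
      rw [hw']
      exact add_mem (one_mem _) (Subalgebra.sum_mem _ fun t _ => hcA t)
    · intro x hx
      have hx' : x ∈ Algebra.adjoin ℤ {θ} := hx
      rw [Algebra.adjoin_singleton_eq_range_aeval] at hx'
      obtain ⟨p, rfl⟩ := hx'
      have hre : (Polynomial.aeval θ).toRingHom p = Polynomial.aeval θ p := rfl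
      rw [hre, Polynomial.aeval_eq_sum_range]
      exact Submodule.sum_mem _ fun i _ => Submodule.smul_mem _ _ (hpowT i)
  refine ⟨?_, hspan⟩
  rw [Fintype.linearIndependent_iff]
  intro g hg
  set W : ℕ → ℚ[X] := fun i => 1 + ∑ t ∈ Finset.Icc 1 i, Polynomial.dickson 1 (1:ℚ) t with hWset
  have hWdef : ∀ i : ℕ, W i = 1 + ∑ t ∈ Finset.Icc 1 i, Polynomial.dickson 1 (1:ℚ) t :=
    fun i => rfl
  have hWθ : ∀ i : Fin (2 ^ (m' + 3 - 2)), Polynomial.aeval θ (W (i : ℕ)) = w i := by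
    intro i
    rw [hWdef, hw', map_add, map_one, map_sum]
    congr 1
    exact Finset.sum_congr rfl fun t _ => by rw [hcdef, hθdef]; exact aux_eval hω0 t
  have hWdeg : ∀ i : ℕ, (W i).natDegree ≤ i := by
    intro i
    rw [hWdef]
    refine le_trans (Polynomial.natDegree_add_le _ _) (max_le (by simp) ?_)
    exact Polynomial.natDegree_sum_le_of_forall_le _ _ fun t ht =>
      le_trans (dick_deg_le t) (Finset.mem_Icc.mp ht).2
  have hWcoeff : ∀ i : ℕ, (W i).coeff i = 1 := by
    intro i
    rcases i with _ | s
    · rw [hWdef]; simp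
    · have h1 : (Polynomial.dickson 1 (1:ℚ) (s + 1)).coeff (s + 1) = 1 := by
        have h := dick_aux s
        have h2 := h.1.coeff_natDegree
        rwa [h.2] at h2
      rw [hWdef, Polynomial.coeff_add, Polynomial.finset_sum_coeff,
        Finset.sum_eq_single (s + 1)
          (fun t ht hne => Polynomial.coeff_eq_zero_of_natDegree_lt (by
            have h2 := dick_deg_le t
            have h3 := (Finset.mem_Icc.mp ht).2
            omega))
          (fun h => absurd (Finset.mem_Icc.mpr (by omega)) h), h1,
        Polynomial.coeff_one, if_neg (by omega)]
      norm_num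
  set P : ℚ[X] := ∑ i : Fin (2 ^ (m' + 3 - 2)), Polynomial.C ((g i : ℚ)) * W (i : ℕ) with hP
  have hPθ : Polynomial.aeval θ P = 0 := by
    rw [hP, map_sum]
    have hterm : ∀ i : Fin (2 ^ (m' + 3 - 2)),
        Polynomial.aeval θ (Polynomial.C ((g i : ℚ)) * W (i : ℕ)) = (g i : ℂ) * w i := by
      intro i
      rw [map_mul, Polynomial.aeval_C, hWθ]
      norm_num
    rw [Finset.sum_congr rfl fun i _ => hterm i]
    have hg' : ∑ i, ((g i : ℂ) * w i) = 0 := by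
      rw [← hg]
      exact Finset.sum_congr rfl fun i _ => by rw [zsmul_eq_mul]
    exact hg'
  have hPdeg : P.natDegree < 2 ^ (m' + 1) := by
    have hple : P.natDegree ≤ 2 ^ (m' + 1) - 1 := by
      rw [hP]
      refine Polynomial.natDegree_sum_le_of_forall_le _ _ fun i _ => ?_
      refine le_trans (Polynomial.natDegree_mul_le) ?_
      have h1 : (W (i : ℕ)).natDegree ≤ (i : ℕ) := hWdeg i
      have h2 : (i : ℕ) < 2 ^ (m' + 1) := i.isLt
      simp only [Polynomial.natDegree_C]
      omega
    have hpos : (0:ℕ) < 2 ^ (m' + 1) := by positivity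
    omega
  have hP0 : P = 0 := by
    by_contra hne
    have hdvd := minpoly.dvd ℚ θ hPθ
    have hle := Polynomial.natDegree_le_of_dvd hdvd hne
    have hL1 := aux_L1 m' hω
    rw [← hθdef] at hL1
    omega
  intro i
  by_contra hgi
  have hsne : (Finset.univ.filter (fun j : Fin (2 ^ (m' + 3 - 2)) => g j ≠ 0)).Nonempty :=
    ⟨i, by simp [hgi]⟩
  set n := (Finset.univ.filter (fun j : Fin (2 ^ (m' + 3 - 2)) => g j ≠ 0)).max' hsne with hn
  have hns : g n ≠ 0 := by
    have h := (Finset.univ.filter (fun j : Fin (2 ^ (m' + 3 - 2)) => g j ≠ 0)).max'_mem hsne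
    rw [Finset.mem_filter] at h
    exact h.2
  have hcoeff : P.coeff (n : ℕ) = (g n : ℚ) := by
    rw [hP, Polynomial.finset_sum_coeff, Finset.sum_eq_single n]
    · rw [Polynomial.coeff_C_mul, hWcoeff, mul_one]
    · intro b _ hbn
      rw [Polynomial.coeff_C_mul]
      rcases eq_or_ne (g b) 0 with h | h
      · rw [h]; norm_num
      · have hbs : b ∈ Finset.univ.filter (fun j : Fin (2 ^ (m' + 3 - 2)) => g j ≠ 0) := by
          rw [Finset.mem_filter]; exact ⟨Finset.mem_univ _, h⟩
        have hble : b ≤ n := Finset.le_max' _ b hbs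
        have hblt' : b < n := lt_of_le_of_ne hble hbn
        have hblt : (b : ℕ) < (n : ℕ) := hblt'
        rw [Polynomial.coeff_eq_zero_of_natDegree_lt (lt_of_le_of_lt (hWdeg b) hblt), mul_zero]
    · intro h; exact absurd (Finset.mem_univ n) h
  rw [hP0, Polynomial.coeff_zero] at hcoeff
  exact hns (by exact_mod_cast hcoeff.symm)
end

section
/- Let m ≥ 3, ω a primitive 2^m-th root of unity, θ_j = ω^j + ω^{-j}, k = 2^{m-2}, and L = Q(θ_1). The ℤ-module L₀ generated by {2, θ_1, θ_2, ..., θ_{k-1}} equals the principal ideal θ_1·O_L of O_L. -/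
/-- The ℤ-module generated by `{2, θ_1, ..., θ_{k-1}}`, where `θ_t = ω^t + ω^{-t}` and
`k = 2^{m-2}`, equals the principal ideal `θ_1 · O_L` of `O_L = ℤ[θ_1]`,
`L = ℚ(θ_1)` being the maximal real subfield of the `2^m`-th cyclotomic field. -/
theorem stmt13 (m : ℕ) (hm : 3 ≤ m) (ω : ℂ) (hω : IsPrimitiveRoot ω (2 ^ m)) :
    ∀ y : ℂ,
      y ∈ Submodule.span ℤ
          (insert (2 : ℂ) ((fun t : ℕ => ω ^ t + (ω ^ t)⁻¹) '' Set.Ico 1 (2 ^ (m - 2)))) ↔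
        ∃ c ∈ Algebra.adjoin ℤ {ω + ω⁻¹}, y = (ω + ω⁻¹) * c := by
  have hω0 : ω ≠ 0 := hω.ne_zero (by positivity)
  set k : ℕ := 2 ^ (m - 2) with hk
  have hkpos : 0 < k := Nat.pow_pos (by norm_num)
  set θ : ℕ → ℂ := fun t : ℕ => ω ^ t + (ω ^ t)⁻¹ with hθ
  set M : Submodule ℤ ℂ :=
    Submodule.span ℤ (insert (2 : ℂ) (θ '' Set.Ico 1 k)) with hMdef
  set A : Subalgebra ℤ ℂ := Algebra.adjoin ℤ {ω + ω⁻¹} with hA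
  have hθ0 : θ 0 = 2 := by norm_num [hθ]
  have hθ1 : θ 1 = ω + ω⁻¹ := by simp [hθ]
  -- ω ^ (2 * k) = -1
  have h2k : ω ^ (2 * k) = -1 := by
    have h1 : 2 * k = 2 ^ (m - 1) := by
      rw [hk, ← pow_succ']
      congr 1
      omega
    have hsq : (ω ^ (2 * k)) * (ω ^ (2 * k)) = 1 := by
      rw [← pow_add]
      have : 2 * k + 2 * k = 2 ^ m := by
        rw [h1, ← two_mul, ← pow_succ']
        congr 1
        omega
      rw [this, hω.pow_eq_one]
    have hne : ω ^ (2 * k) ≠ 1 := by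
      rw [h1]
      intro hcon
      have := Nat.le_of_dvd (by positivity) ((hω.pow_eq_one_iff_dvd _).mp hcon)
      have : (2:ℕ) ^ m ≤ 2 ^ (m - 1) := this
      have h2 : (2:ℕ) ^ (m-1) < 2 ^ m := Nat.pow_lt_pow_right (by norm_num) (by omega)
      omega
    rcases mul_self_eq_one_iff.mp hsq with h | h
    · exact absurd h hne
    · exact h
  have hzk : (ω ^ k) * (ω ^ k) = -1 := by
    rw [← pow_add, ← two_mul, h2k]
  have hzkinv : (ω ^ k)⁻¹ = -(ω ^ k) :=
    inv_eq_of_mul_eq_one_right (by rw [mul_neg, hzk, neg_neg])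
  have hωi : ω * ω⁻¹ = 1 := mul_inv_cancel₀ hω0
  have hθk : θ k = 0 := by
    simp only [hθ]
    rw [hzkinv]
    ring
  -- the basic recurrence
  have hrec : ∀ t : ℕ, θ (t + 2) = (ω + ω⁻¹) * θ (t + 1) - θ t := by
    intro t
    simp only [hθ, ← inv_pow]
    linear_combination (-(ω ^ t) - ω⁻¹ ^ t) * hωi
  -- shift by 2k negates
  have hshift : ∀ s : ℕ, θ (2 * k + s) = -θ s := by
    intro s
    simp only [hθ, pow_add, h2k]
    rw [neg_one_mul, inv_neg]
    ring
  -- reflection about k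
  have hrefl : ∀ s : ℕ, s ≤ k → θ (k + s) = -θ (k - s) := by
    intro s hs
    simp only [hθ]
    rw [pow_add, pow_sub₀ ω hω0 hs, mul_inv, mul_inv, inv_inv, hzkinv]
    ring
  -- all θ t lie in M
  have hM : ∀ t : ℕ, θ t ∈ M := by
    intro t
    induction t using Nat.strong_induction_on with
    | _ t ih =>
      rcases lt_or_ge t k with h | h
      · rcases Nat.eq_zero_or_pos t with rfl | ht
        · rw [hθ0]
          exact Submodule.subset_span (Set.mem_insert _ _)
        · exact Submodule.subset_span (Set.mem_insert_of_mem _ ⟨t, ⟨ht, h⟩, rfl⟩)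
      · by_cases hk' : t = k
        · rw [hk', hθk]; exact Submodule.zero_mem _
        · rcases lt_or_ge t (2 * k) with h2 | h2
          · have h3 : t = k + (t - k) := by omega
            rw [h3, hrefl (t - k) (by omega)]
            exact neg_mem (ih _ (by omega))
          · have h3 : t = 2 * k + (t - 2 * k) := by omega
            rw [h3, hshift]
            exact neg_mem (ih _ (by omega))
  -- all θ t lie in A
  have h2A : (2 : ℂ) ∈ A := by
    rw [show (2 : ℂ) = 1 + 1 by norm_num]
    exact A.add_mem A.one_mem A.one_mem
  have hθA : ∀ t : ℕ, θ t ∈ A := by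
    have key : ∀ t : ℕ, θ t ∈ A ∧ θ (t + 1) ∈ A := by
      intro t
      induction t with
      | zero =>
        constructor
        · rw [hθ0]; exact h2A
        · rw [hθ1]; exact Algebra.subset_adjoin rfl
      | succ n ihn =>
        refine ⟨ihn.2, ?_⟩
        rw [hrec n]
        exact A.sub_mem (A.mul_mem (Algebra.subset_adjoin rfl) ihn.2) ihn.1
    exact fun t => (key t).1
  -- telescoping identity
  have htel : ∀ r : ℕ, θ 0 =
      (ω + ω⁻¹) * (∑ j ∈ Finset.range r, (-1 : ℂ) ^ j * θ (2 * j + 1)) +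
        (-1 : ℂ) ^ r * θ (2 * r) := by
    intro r
    induction r with
    | zero => simp
    | succ r ih =>
      rw [Finset.sum_range_succ]
      have e1 : 2 * (r + 1) = 2 * r + 2 := by ring
      rw [e1]
      have hr := hrec (2 * r)
      linear_combination ih - (-1 : ℂ) ^ (r + 1) * hr
  -- 2 is a θ1-multiple of an element of A
  have h2div : ∃ c ∈ A, (2 : ℂ) = (ω + ω⁻¹) * c := by
    refine ⟨∑ j ∈ Finset.range (2 ^ (m - 3)), (-1 : ℂ) ^ j * θ (2 * j + 1), ?_, ?_⟩
    · exact A.sum_mem fun j _ =>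
        A.mul_mem (A.pow_mem (A.neg_mem A.one_mem) j) (hθA _)
    · have hkr : 2 * 2 ^ (m - 3) = k := by
        rw [hk, ← pow_succ']
        congr 1
        omega
      have := htel (2 ^ (m - 3))
      rw [hkr, hθk] at this
      rw [← hθ0]
      linear_combination this
  -- every θ t is a θ1-multiple of an element of A
  have hBdiv : ∀ t : ℕ, ∃ c ∈ A, θ t = (ω + ω⁻¹) * c := by
    have key : ∀ t : ℕ, (∃ c ∈ A, θ t = (ω + ω⁻¹) * c) ∧
        ∃ c ∈ A, θ (t + 1) = (ω + ω⁻¹) * c := by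
      intro t
      induction t with
      | zero =>
        refine ⟨h2div.imp fun c hc => ⟨hc.1, by rw [hθ0]; exact hc.2⟩, ⟨1, A.one_mem, ?_⟩⟩
        rw [hθ1, mul_one]
      | succ n ihn =>
        refine ⟨ihn.2, ?_⟩
        obtain ⟨b, hbA, hb⟩ := ihn.1
        refine ⟨θ (n + 1) - b, A.sub_mem (hθA _) hbA, ?_⟩
        rw [hrec n, hb]
        ring
    exact fun t => (key t).1
  -- M is stable under multiplication by elements of A
  have hmulθ : ∀ x ∈ M, (ω + ω⁻¹) * x ∈ M := by
    intro x hx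
    induction hx using Submodule.span_induction with
    | mem x hxs =>
      rcases hxs with rfl | ⟨t, ⟨ht1, _⟩, rfl⟩
      · have : (ω + ω⁻¹) * 2 = θ 1 + θ 1 := by rw [hθ1]; ring
        rw [this]
        exact M.add_mem (hM 1) (hM 1)
      · obtain ⟨s, rfl⟩ := Nat.exists_eq_add_of_le ht1
        have : (ω + ω⁻¹) * θ (1 + s) = θ (s + 2) + θ s := by
          have e : 1 + s = s + 1 := by omega
          rw [e]
          simp only [hθ, ← inv_pow]
          linear_combination (ω ^ s + ω⁻¹ ^ s) * hωi
        rw [this]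
        exact M.add_mem (hM _) (hM _)
    | zero => rw [mul_zero]; exact M.zero_mem
    | add x y hx hy ihx ihy => rw [mul_add]; exact M.add_mem ihx ihy
    | smul a x hx ihx => rw [mul_smul_comm]; exact M.smul_mem _ ihx
  have hmulA : ∀ c ∈ A, ∀ x ∈ M, c * x ∈ M := by
    intro c hc
    induction hc using Algebra.adjoin_induction with
    | mem c hcs =>
      rcases hcs with rfl
      exact hmulθ
    | algebraMap r =>
      intro x hx
      have : (algebraMap ℤ ℂ r) * x = r • x := by
        simp [Algebra.smul_def]
      rw [this]
      exact M.smul_mem _ hx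
    | add a b ha hb iha ihb =>
      intro x hx
      rw [add_mul]
      exact M.add_mem (iha x hx) (ihb x hx)
    | mul a b ha hb iha ihb =>
      intro x hx
      rw [mul_assoc]
      exact iha _ (ihb x hx)
  -- conclude
  intro y
  constructor
  · intro hy
    induction hy using Submodule.span_induction with
    | mem x hxs =>
      rcases hxs with rfl | ⟨t, ⟨ht1, _⟩, rfl⟩
      · exact h2div
      · exact hBdiv t
    | zero => exact ⟨0, A.zero_mem, by rw [mul_zero]⟩
    | add x y hx hy ihx ihy =>
      obtain ⟨c, hcA, hc⟩ := ihx
      obtain ⟨d, hdA, hd⟩ := ihy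
      exact ⟨c + d, A.add_mem hcA hdA, by rw [hc, hd]; ring⟩
    | smul a x hx ihx =>
      obtain ⟨c, hcA, hc⟩ := ihx
      refine ⟨a • c, A.smul_mem hcA a, ?_⟩
      rw [hc, mul_smul_comm]
  · rintro ⟨c, hcA, rfl⟩
    have : (ω + ω⁻¹) * c = c * θ 1 := by rw [hθ1]; ring
    rw [this]
    exact hmulA c hcA (θ 1) (hM 1)
end
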